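/- arXiv:1204.1856 — 3 statements merged into one kernel-verified Lean document; each statement's English description precedes it below -/
import Mathlib

section
/- Under (H1) and (H2), for every partition Δ: 0=t₀<⋯<t_N=T and every interior node t_k (1 ≤ k ≤ N−1), the jump of P^Δ at t_k is nonnegative; more precisely, ΔP^Δ(t_k) := P^Δ(t_k+0)−P^Δ(t_k−0) = Φ^Δ(T;t_k)ᵀ[G(t_k)−G(t_{k−1})]Φ^Δ(T;t_k) + ∫_{t_k}^T [Φ^Δ(s;t_k)ᵀ(Q(t_k,s)−Q(t_{k−1},s))Φ^Δ(s;t_k) + Ψ^Δ(s;t_k)ᵀ(R(t_k,s)−R(t_{k−1},s))Ψ^Δ(s;t_k)] ds, which is a positive semidefinite matrix. -/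
open Set Matrix MeasureTheory intervalIntegral

attribute [local instance] Matrix.normedAddCommGroup Matrix.normedSpace

@[reducible] def mxTopInst {a b : ℕ} : TopologicalSpace (Matrix (Fin a) (Fin b) ℝ) :=
  Pi.topologicalSpace

section MxTopSec

attribute [local instance] mxTopInst

namespace Stmt3Aux




variable {a b c : ℕ}

lemma mx_norm_mul_le (A : Matrix (Fin a) (Fin b) ℝ) (B : Matrix (Fin b) (Fin c) ℝ) :
    ‖A * B‖ ≤ b * ‖A‖ * ‖B‖ := by
  have h0 : (0:ℝ) ≤ b * ‖A‖ * ‖B‖ := by positivity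
  rw [Matrix.norm_le_iff h0]
  intro i j
  calc ‖(A * B) i j‖ = ‖∑ k, A i k * B k j‖ := by rw [Matrix.mul_apply]
    _ ≤ ∑ k, ‖A i k * B k j‖ := norm_sum_le _ _
    _ ≤ ∑ _k : Fin b, ‖A‖ * ‖B‖ := by
        refine Finset.sum_le_sum fun k _ => ?_
        rw [norm_mul]
        exact mul_le_mul (Matrix.norm_entry_le_entrywise_sup_norm A)
          (Matrix.norm_entry_le_entrywise_sup_norm B) (norm_nonneg _) (norm_nonneg _)
    _ = b * ‖A‖ * ‖B‖ := by simp [Finset.sum_const, mul_assoc]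

lemma continuous_mx_mul :
    Continuous fun p : Matrix (Fin a) (Fin b) ℝ × Matrix (Fin b) (Fin c) ℝ => p.1 * p.2 :=
  Continuous.matrix_mul continuous_fst continuous_snd

lemma cwa_mx_mul {f : ℝ → Matrix (Fin a) (Fin b) ℝ}
    {g : ℝ → Matrix (Fin b) (Fin c) ℝ} {s : Set ℝ} {x : ℝ}
    (hf : ContinuousWithinAt f s x) (hg : ContinuousWithinAt g s x) :
    ContinuousWithinAt (fun t => f t * g t) s x :=
  (continuous_mx_mul.continuousAt).comp_continuousWithinAt (hf.prodMk hg)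

lemma con_mx_mul {f : ℝ → Matrix (Fin a) (Fin b) ℝ}
    {g : ℝ → Matrix (Fin b) (Fin c) ℝ} {s : Set ℝ}
    (hf : ContinuousOn f s) (hg : ContinuousOn g s) :
    ContinuousOn (fun t => f t * g t) s :=
  fun x hx => cwa_mx_mul (hf x hx) (hg x hx)

noncomputable def transCLM : Matrix (Fin a) (Fin b) ℝ →L[ℝ] Matrix (Fin b) (Fin a) ℝ :=
  LinearMap.toContinuousLinearMap
    { toFun := fun M => Mᵀ
      map_add' := fun M N => Matrix.transpose_add M N
      map_smul' := fun r M => Matrix.transpose_smul r M }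

@[simp] lemma transCLM_apply (M : Matrix (Fin a) (Fin b) ℝ) : transCLM M = Mᵀ := rfl

lemma continuous_transpose : Continuous fun M : Matrix (Fin a) (Fin b) ℝ => Mᵀ :=
  (transCLM (a := a) (b := b)).continuous

noncomputable def lmulCLM (M : Matrix (Fin a) (Fin b) ℝ) :
    Matrix (Fin b) (Fin c) ℝ →L[ℝ] Matrix (Fin a) (Fin c) ℝ :=
  LinearMap.toContinuousLinearMap
    { toFun := fun X => M * X
      map_add' := fun X Y => Matrix.mul_add M X Y
      map_smul' := fun r X => (Matrix.mul_smul M r X) }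

@[simp] lemma lmulCLM_apply (M : Matrix (Fin a) (Fin b) ℝ) (X : Matrix (Fin b) (Fin c) ℝ) :
    lmulCLM M X = M * X := rfl

noncomputable def rmulCLM (M : Matrix (Fin b) (Fin c) ℝ) :
    Matrix (Fin a) (Fin b) ℝ →L[ℝ] Matrix (Fin a) (Fin c) ℝ :=
  LinearMap.toContinuousLinearMap
    { toFun := fun X => X * M
      map_add' := fun X Y => Matrix.add_mul X Y M
      map_smul' := fun r X => Matrix.smul_mul r X M }

@[simp] lemma rmulCLM_apply (M : Matrix (Fin b) (Fin c) ℝ) (X : Matrix (Fin a) (Fin b) ℝ) :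
    rmulCLM M X = X * M := rfl

noncomputable def quadCLM (x : Fin a → ℝ) : Matrix (Fin a) (Fin a) ℝ →L[ℝ] ℝ :=
  LinearMap.toContinuousLinearMap
    { toFun := fun M => x ⬝ᵥ M.mulVec x
      map_add' := fun M N => by simp [Matrix.add_mulVec, dotProduct_add]
      map_smul' := fun r M => by simp [Matrix.smul_mulVec, dotProduct_smul] }

@[simp] lemma quadCLM_apply (x : Fin a → ℝ) (M : Matrix (Fin a) (Fin a) ℝ) :
    quadCLM x M = x ⬝ᵥ M.mulVec x := rfl

lemma isBoundedBilinearMap_mx_mul :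
    IsBoundedBilinearMap ℝ
      (fun p : Matrix (Fin a) (Fin b) ℝ × Matrix (Fin b) (Fin c) ℝ => p.1 * p.2) where
  add_left := fun A A' B => Matrix.add_mul A A' B
  smul_left := fun r A B => Matrix.smul_mul r A B
  add_right := fun A B B' => Matrix.mul_add A B B'
  smul_right := fun r A B => Matrix.mul_smul A r B
  bound := ⟨(b : ℝ) + 1, by positivity, fun A B => by
    calc ‖A * B‖ ≤ b * ‖A‖ * ‖B‖ := mx_norm_mul_le A B
      _ ≤ ((b : ℝ) + 1) * ‖A‖ * ‖B‖ := by
          have := norm_nonneg A; have := norm_nonneg B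
          nlinarith⟩

lemma hasDerivAt_mx_mul {f : ℝ → Matrix (Fin a) (Fin b) ℝ}
    {g : ℝ → Matrix (Fin b) (Fin c) ℝ} {f' : Matrix (Fin a) (Fin b) ℝ}
    {g' : Matrix (Fin b) (Fin c) ℝ} {x : ℝ}
    (hf : HasDerivAt f f' x) (hg : HasDerivAt g g' x) :
    HasDerivAt (fun t => f t * g t) (f' * g x + f x * g') x := by
  have h := (isBoundedBilinearMap_mx_mul.hasFDerivAt (f x, g x)).comp_hasDerivAt x
    (hf.prodMk hg)
  have h2 : HasDerivAt (fun t => f t * g t) (f x * g' + f' * g x) x := by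
    simpa [Function.comp_def] using h
  simpa [add_comm] using h2





variable {a b c : ℕ}

lemma ae_ne (y : ℝ) : ∀ᵐ s : ℝ, s ≠ y := by
  rw [MeasureTheory.ae_iff]
  have : {s : ℝ | ¬ s ≠ y} = {y} := by ext s; simp [eq_comm]
  rw [this]
  exact Real.volume_singleton

lemma psd_intervalIntegral {f : ℝ → Matrix (Fin a) (Fin a) ℝ} {x y : ℝ} (hxy : x ≤ y)
    (hpsd : ∀ s ∈ Ioo x y, (f s).PosSemidef) :
    (∫ s in x..y, f s).PosSemidef := by
  by_cases hint : IntervalIntegrable f volume x y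
  · refine Matrix.PosSemidef.of_dotProduct_mulVec_nonneg ?_ ?_
    · show _ = _
      rw [Matrix.conjTranspose_eq_transpose_of_trivial, ← transCLM_apply,
        ← ContinuousLinearMap.intervalIntegral_comp_comm _ hint]
      refine intervalIntegral.integral_congr_ae ?_
      filter_upwards [ae_ne y] with s hs hmem
      rw [Set.uIoc_of_le hxy] at hmem
      have hso : s ∈ Ioo x y := ⟨hmem.1, lt_of_le_of_ne hmem.2 hs⟩
      have h := (hpsd s hso).isHermitian
      rw [Matrix.IsHermitian, Matrix.conjTranspose_eq_transpose_of_trivial] at h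
      simpa using h
    · intro v
      have : star v ⬝ᵥ ((∫ s in x..y, f s).mulVec v) = v ⬝ᵥ ((∫ s in x..y, f s).mulVec v) := by
        simp
      rw [this, ← quadCLM_apply, ← ContinuousLinearMap.intervalIntegral_comp_comm _ hint]
      refine intervalIntegral.integral_nonneg_of_ae_restrict hxy ?_
      filter_upwards [ae_restrict_mem measurableSet_Icc, ae_restrict_of_ae (ae_ne x),
        ae_restrict_of_ae (ae_ne y)] with s hsIcc hsx hsy
      have hso : s ∈ Ioo x y :=
        ⟨lt_of_le_of_ne hsIcc.1 (Ne.symm hsx), lt_of_le_of_ne hsIcc.2 hsy⟩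
      have h := (hpsd s hso).dotProduct_mulVec_nonneg v
      simpa using h
  · rw [intervalIntegral.integral_undef hint]
    exact Matrix.PosSemidef.zero





variable {a b c d : ℕ}

lemma norm_one_mx_le : ‖(1 : Matrix (Fin d) (Fin d) ℝ)‖ ≤ 1 := by
  rw [Matrix.norm_le_iff zero_le_one]
  intro i j
  rw [Matrix.one_apply]
  split <;> simp

/-- integrability of a product of a.e.-measurable bounded matrix functions -/
lemma mx_mul_integrableOn {C : ℝ → Matrix (Fin a) (Fin b) ℝ}
    {Φ : ℝ → Matrix (Fin b) (Fin c) ℝ} {s : Set ℝ} (hs : MeasurableSet s)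
    (hfin : volume s ≠ ⊤)
    (hCm : AEStronglyMeasurable C (volume.restrict s))
    (hΦm : AEStronglyMeasurable Φ (volume.restrict s))
    {bC bΦ : ℝ} (hbC : ∀ r ∈ s, ‖C r‖ ≤ bC) (hbΦ : ∀ r ∈ s, ‖Φ r‖ ≤ bΦ)
    (hbC0 : 0 ≤ bC) (hbΦ0 : 0 ≤ bΦ) :
    IntegrableOn (fun r => C r * Φ r) s := by
  have hm : AEStronglyMeasurable (fun r => C r * Φ r) (volume.restrict s) :=
    continuous_mx_mul.comp_aestronglyMeasurable (hCm.prodMk hΦm)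
  refine Integrable.mono' (g := fun _ => (b : ℝ) * bC * bΦ) ?_ hm ?_
  · exact integrableOn_const hfin
  · filter_upwards [ae_restrict_mem hs] with r hr
    calc ‖C r * Φ r‖ ≤ b * ‖C r‖ * ‖Φ r‖ := mx_norm_mul_le _ _
      _ ≤ b * bC * bΦ := by
          gcongr <;> first
            | exact mul_nonneg (Nat.cast_nonneg b) hbC0
            | exact (norm_nonneg _).trans (hbC r hr)
            | exact hbC r hr
            | exact hbΦ r hr

variable {C Φ D : ℝ → Matrix (Fin d) (Fin d) ℝ} {ta tb K0 : ℝ}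

/-- right-sided derivative of the primitive, within `Ici`. -/
lemma primitive_hasDerivWithinAt_right {g : ℝ → Matrix (Fin d) (Fin d) ℝ} {t tb' : ℝ}
    (ht : t ∈ Ico ta tb') (hint : IntervalIntegrable g volume ta t)
    (hmeas : AEStronglyMeasurable g (volume.restrict (Ioo t tb')))
    (hcont : ContinuousWithinAt g (Ioi t) t) :
    HasDerivWithinAt (fun s => ∫ r in ta..s, g r) (g t) (Ici t) t := by
  refine intervalIntegral.integral_hasDerivWithinAt_right hint ?_ hcont
  exact ⟨Ioo t tb', Ioo_mem_nhdsGT_of_mem ⟨le_refl t, ht.2⟩, hmeas⟩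

/-- The key Volterra integral equation package. -/
lemma volterra_main (hab : ta ≤ tb) (hK0 : 0 ≤ K0)
    (hCm : AEStronglyMeasurable C (volume.restrict (Ico ta tb)))
    (hCbd : ∀ r ∈ Ico ta tb, ‖C r‖ ≤ K0)
    (hCrc : ∀ t ∈ Ico ta tb, ContinuousWithinAt C (Ici t) t)
    (hΦ : ∀ s ∈ Icc ta tb, Φ s = 1 + ∫ r in ta..s, C r * Φ r) :
    IntegrableOn (fun r => C r * Φ r) (Ioc ta tb) ∧
      ContinuousOn Φ (Icc ta tb) ∧
      (∀ t ∈ Icc ta tb, ‖Φ t‖ ≤ Real.exp ((d * K0) * (tb - ta))) := by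
  classical
  set K1 : ℝ := d * K0 with hK1
  have hK10 : 0 ≤ K1 := by positivity
  set g : ℝ → Matrix (Fin d) (Fin d) ℝ := fun r => C r * Φ r with hg
  set F : ℝ → Matrix (Fin d) (Fin d) ℝ := fun s => 1 + ∫ r in ta..s, g r with hF
  have hFΦ : ∀ s ∈ Icc ta tb, Φ s = F s := hΦ
  set S : Set ℝ := {s | s ∈ Icc ta tb ∧ IntegrableOn g (Ioc ta s)} with hS
  have hSa : ta ∈ S := by
    refine ⟨⟨le_refl _, hab⟩, ?_⟩
    rw [Ioc_self]; exact integrableOn_empty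
  have hSsub : S ⊆ Icc ta tb := fun s hs => hs.1
  have hSne : S.Nonempty := ⟨ta, hSa⟩
  have hSbdd : BddAbove S := ⟨tb, fun s hs => hs.1.2⟩
  -- key step: on [ta, s'] for s' ∈ S, F is continuous and bounded
  have key : ∀ s' ∈ S, ContinuousOn F (Icc ta s') ∧
      ∀ t ∈ Icc ta s', ‖F t‖ ≤ Real.exp (K1 * (tb - ta)) := by
    intro s' hs'
    obtain ⟨⟨has', hs'b⟩, hint⟩ := hs'
    have hIcc : IntegrableOn g (Icc ta s') := by
      rwa [integrableOn_Icc_iff_integrableOn_Ioc]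
    have hFcont : ContinuousOn F (Icc ta s') := by
      have := intervalIntegral.continuousOn_primitive_interval
        (f := g) (a := ta) (b := s') (μ := volume) (by rwa [uIcc_of_le has'])
      rw [uIcc_of_le has'] at this
      exact (continuous_const.continuousOn).add this
    refine ⟨hFcont, ?_⟩
    -- right derivative of F on Ico ta s'
    have hder : ∀ t ∈ Ico ta s', HasDerivWithinAt F (g t) (Ici t) t := by
      intro t ht
      have hint_t : IntervalIntegrable g volume ta t :=
        (intervalIntegrable_iff_integrableOn_Ioc_of_le ht.1).mpr
          (hint.mono_set (Ioc_subset_Ioc le_rfl ht.2.le))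
      have hmeas : AEStronglyMeasurable g (volume.restrict (Ioo t s')) :=
        hint.aestronglyMeasurable.mono_measure
          (Measure.restrict_mono (show Ioo t s' ⊆ Ioc ta s' from
            fun r hr => ⟨lt_of_le_of_lt ht.1 hr.1, hr.2.le⟩) le_rfl)
      have hΦF : ∀ r ∈ Ioo t s', Φ r = F r := by
        intro r hr
        exact hFΦ r ⟨ht.1.trans hr.1.le, hr.2.le.trans hs'b⟩
      have hFcwa : ContinuousWithinAt F (Ioi t) t := by
        refine (hFcont t ⟨ht.1, ht.2.le⟩).mono_of_mem_nhdsWithin ?_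
        have : Ioo t s' ∈ nhdsWithin t (Ioi t) := Ioo_mem_nhdsGT_of_mem ⟨le_refl t, ht.2⟩
        exact Filter.mem_of_superset this (fun r hr => ⟨ht.1.trans hr.1.le, hr.2.le⟩)
      have hΦcwa : ContinuousWithinAt Φ (Ioi t) t := by
        refine hFcwa.congr_of_eventuallyEq ?_ (hFΦ t ⟨ht.1, ht.2.le.trans hs'b⟩)
        filter_upwards [Ioo_mem_nhdsGT_of_mem (⟨le_refl t, ht.2⟩ : t ∈ Ico t s')] with r hr
        exact hΦF r hr
      have hCcwa : ContinuousWithinAt C (Ioi t) t :=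
        (hCrc t ⟨ht.1, lt_of_lt_of_le ht.2 hs'b⟩).mono Ioi_subset_Ici_self
      have hgc : ContinuousWithinAt g (Ioi t) t := cwa_mx_mul hCcwa hΦcwa
      have := primitive_hasDerivWithinAt_right (ta := ta) (tb' := s') ht hint_t hmeas hgc
      simpa [hF] using this.const_add (1 : Matrix (Fin d) (Fin d) ℝ)
    -- Gronwall
    have hFa : ‖F ta‖ ≤ 1 := by
      simp only [hF, intervalIntegral.integral_same, add_zero]
      exact norm_one_mx_le
    have hbound : ∀ t ∈ Ico ta s', ‖g t‖ ≤ K1 * ‖F t‖ + 0 := by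
      intro t ht
      have htmem : t ∈ Icc ta tb := ⟨ht.1, ht.2.le.trans hs'b⟩
      have h1 : ‖g t‖ ≤ d * ‖C t‖ * ‖Φ t‖ := mx_norm_mul_le _ _
      have h2 : ‖C t‖ ≤ K0 := hCbd t ⟨ht.1, lt_of_lt_of_le ht.2 hs'b⟩
      have h3 : Φ t = F t := hFΦ t htmem
      rw [add_zero, hK1]
      calc ‖g t‖ ≤ d * ‖C t‖ * ‖Φ t‖ := h1
        _ ≤ d * K0 * ‖Φ t‖ := by
            gcongr <;> first
              | exact mul_nonneg (Nat.cast_nonneg d) ((norm_nonneg _).trans h2)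
              | exact (norm_nonneg _).trans h2
              | exact h2
        _ = d * K0 * ‖F t‖ := by rw [h3]
    have hgron := norm_le_gronwallBound_of_norm_deriv_right_le hFcont hder hFa hbound
    intro t ht
    have := hgron t ht
    rw [gronwallBound_ε0] at this
    calc ‖F t‖ ≤ 1 * Real.exp (K1 * (t - ta)) := this
      _ ≤ Real.exp (K1 * (tb - ta)) := by
          rw [one_mul]
          exact Real.exp_le_exp.mpr (by nlinarith [ht.1, ht.2.trans hs'b])
  -- the supremum of S is tb
  set c := sSup S with hc
  have hcIcc : c ∈ Icc ta tb := ⟨le_csSup hSbdd hSa, csSup_le hSne fun s hs => hs.1.2⟩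
  have hcS : c ∈ S := by
    refine ⟨hcIcc, ?_⟩
    rw [integrableOn_Ioc_iff_integrableOn_Ioo]
    have hFct : ∀ t ∈ Ioo ta c, ContinuousAt F t := by
      intro t ht
      obtain ⟨s', hs'S, hts'⟩ := exists_lt_of_lt_csSup hSne ht.2
      exact ((key s' hs'S).1).continuousAt (Icc_mem_nhds ht.1 hts')
    have hΦbd : ∀ t ∈ Ioo ta c, ‖Φ t‖ ≤ Real.exp (K1 * (tb - ta)) := by
      intro t ht
      obtain ⟨s', hs'S, hts'⟩ := exists_lt_of_lt_csSup hSne ht.2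
      have h1 := (key s' hs'S).2 t ⟨ht.1.le, hts'.le⟩
      rwa [← hFΦ t ⟨ht.1.le, (hts'.le.trans hs'S.1.2)⟩] at h1
    have hΦm : AEStronglyMeasurable Φ (volume.restrict (Ioo ta c)) := by
      have hFm : AEStronglyMeasurable F (volume.restrict (Ioo ta c)) :=
        (ContinuousOn.aestronglyMeasurable
          (fun t ht => (hFct t ht).continuousWithinAt) measurableSet_Ioo)
      refine hFm.congr ?_
      filter_upwards [ae_restrict_mem measurableSet_Ioo] with r hr
      exact (hFΦ r ⟨hr.1.le, hr.2.le.trans hcIcc.2⟩).symm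
    refine mx_mul_integrableOn measurableSet_Ioo (ne_of_lt measure_Ioo_lt_top) ?_ hΦm
      (fun r hr => hCbd r ⟨hr.1.le, lt_of_lt_of_le hr.2 hcIcc.2⟩)
      (fun r hr => hΦbd r hr) hK0 (Real.exp_nonneg _)
    exact hCm.mono_measure (Measure.restrict_mono (show Ioo ta c ⊆ Ico ta tb from
      fun r hr => ⟨hr.1.le, lt_of_lt_of_le hr.2 hcIcc.2⟩) le_rfl)
  have htbS : tb ∈ S := by
    rcases eq_or_lt_of_le hcIcc.2 with h | h
    · rwa [h] at hcS
    · exfalso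
      have hone : ∀ r ∈ Ioc c tb, Φ r = 1 := by
        intro r hr
        have hrIcc : r ∈ Icc ta tb := ⟨hcIcc.1.trans hr.1.le, hr.2⟩
        have hrnS : r ∉ S := fun hrS => absurd (le_csSup hSbdd hrS) (not_le.mpr hr.1)
        have hnint : ¬ IntegrableOn g (Ioc ta r) := fun hh => hrnS ⟨hrIcc, hh⟩
        have hnii : ¬ IntervalIntegrable g volume ta r :=
          fun hh => hnint ((intervalIntegrable_iff_integrableOn_Ioc_of_le hrIcc.1).mp hh)
        rw [hΦ r hrIcc, intervalIntegral.integral_undef hnii, add_zero]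
      have hgint2 : IntegrableOn g (Ioo c tb) := by
        have hCint : IntegrableOn C (Ioo c tb) := by
          refine Integrable.mono' (g := fun _ => K0)
            (integrableOn_const measure_Ioo_lt_top.ne) ?_ ?_
          · exact hCm.mono_measure (Measure.restrict_mono (show Ioo c tb ⊆ Ico ta tb from
              fun r hr => ⟨hcIcc.1.trans hr.1.le, hr.2⟩) le_rfl)
          · filter_upwards [ae_restrict_mem measurableSet_Ioo] with r hr
            exact hCbd r ⟨hcIcc.1.trans hr.1.le, hr.2⟩
        refine hCint.congr_fun ?_ measurableSet_Ioo
        intro r hr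
        show C r = C r * Φ r
        rw [hone r ⟨hr.1, hr.2.le⟩, mul_one]
      have htb : tb ∈ S := by
        refine ⟨⟨hab, le_refl _⟩, ?_⟩
        rw [← Ioc_union_Ioc_eq_Ioc hcIcc.1 hcIcc.2]
        exact hcS.2.union ((integrableOn_Ioc_iff_integrableOn_Ioo).mpr hgint2)
      exact absurd (le_csSup hSbdd htb) (not_le.mpr h)
  have hgint : IntegrableOn g (Ioc ta tb) := htbS.2
  have hFcont := (key tb htbS).1
  refine ⟨hgint, hFcont.congr (fun s hs => hFΦ s hs), fun t ht => ?_⟩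
  rw [hFΦ t ht]
  exact (key tb htbS).2 t ht

/-- derivative of Φ at interior points where `C` is continuous. -/
lemma volterra_hasDerivAt (hab : ta ≤ tb)
    (hgint : IntegrableOn (fun r => C r * Φ r) (Ioc ta tb))
    (hΦcont : ContinuousOn Φ (Icc ta tb))
    (hΦ : ∀ s ∈ Icc ta tb, Φ s = 1 + ∫ r in ta..s, C r * Φ r)
    {t : ℝ} (ht : t ∈ Ioo ta tb) (hCt : ContinuousAt C t) :
    HasDerivAt Φ (C t * Φ t) t := by
  set g : ℝ → Matrix (Fin d) (Fin d) ℝ := fun r => C r * Φ r with hgdef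
  have hΦat : ContinuousAt Φ t := hΦcont.continuousAt (Icc_mem_nhds ht.1 ht.2)
  have hgat : ContinuousAt g t :=
    continuous_mx_mul.continuousAt.comp (hCt.prodMk hΦat)
  have hii : IntervalIntegrable g volume ta t :=
    (intervalIntegrable_iff_integrableOn_Ioc_of_le ht.1.le).mpr
      (hgint.mono_set (Ioc_subset_Ioc le_rfl ht.2.le))
  have hmeas : StronglyMeasurableAtFilter g (nhds t) volume :=
    ⟨Ioo ta tb, Ioo_mem_nhds ht.1 ht.2, hgint.aestronglyMeasurable.mono_measure
      (Measure.restrict_mono Ioo_subset_Ioc_self le_rfl)⟩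
  have hF : HasDerivAt (fun s => (1 : Matrix (Fin d) (Fin d) ℝ) + ∫ r in ta..s, g r) (g t) t :=
    (intervalIntegral.integral_hasDerivAt_right hii hmeas hgat).const_add _
  refine hF.congr_of_eventuallyEq ?_
  filter_upwards [Icc_mem_nhds ht.1 ht.2] with s hs
  exact hΦ s hs

/-- Gronwall uniqueness for the homogeneous Volterra equation. -/
lemma volterra_unique (hab : ta ≤ tb) (hK0 : 0 ≤ K0)
    (hCm : AEStronglyMeasurable C (volume.restrict (Ico ta tb)))
    (hCbd : ∀ r ∈ Ico ta tb, ‖C r‖ ≤ K0)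
    (hCrc : ∀ t ∈ Ico ta tb, ContinuousWithinAt C (Ici t) t)
    (hDc : ContinuousOn D (Icc ta tb))
    (hD : ∀ s ∈ Icc ta tb, D s = ∫ r in ta..s, C r * D r) :
    ∀ s ∈ Icc ta tb, D s = 0 := by
  set K1 : ℝ := d * K0 with hK1
  have hK10 : 0 ≤ K1 := by positivity
  set g : ℝ → Matrix (Fin d) (Fin d) ℝ := fun r => C r * D r with hgdef
  obtain ⟨bD, hbD⟩ := isCompact_Icc.exists_bound_of_continuousOn hDc
  have hgint : IntegrableOn g (Ioo ta tb) := by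
    refine mx_mul_integrableOn measurableSet_Ioo (ne_of_lt measure_Ioo_lt_top)
      (hCm.mono_measure (Measure.restrict_mono Ioo_subset_Ico_self le_rfl))
      ((hDc.aestronglyMeasurable measurableSet_Icc).mono_measure
        (Measure.restrict_mono Ioo_subset_Icc_self le_rfl))
      (fun r hr => hCbd r (Ioo_subset_Ico_self hr))
      (fun r hr => hbD r (Ioo_subset_Icc_self hr)) hK0 ?_
    rcases isEmpty_or_nonempty (Fin d) with h | h
    · exact (norm_nonneg (D ta)).trans (hbD ta ⟨le_refl _, hab⟩)
    · exact (norm_nonneg (D ta)).trans (hbD ta ⟨le_refl _, hab⟩)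
  have hgint' : IntegrableOn g (Ioc ta tb) :=
    (integrableOn_Ioc_iff_integrableOn_Ioo).mpr hgint
  set F : ℝ → Matrix (Fin d) (Fin d) ℝ := fun s => ∫ r in ta..s, g r with hFdef
  have hFD : ∀ s ∈ Icc ta tb, D s = F s := hD
  have hFcont : ContinuousOn F (Icc ta tb) := by
    have := intervalIntegral.continuousOn_primitive_interval
      (f := g) (a := ta) (b := tb) (μ := volume)
      (by rw [uIcc_of_le hab]; rwa [integrableOn_Icc_iff_integrableOn_Ioc])
    rwa [uIcc_of_le hab] at this
  have hder : ∀ t ∈ Ico ta tb, HasDerivWithinAt F (g t) (Ici t) t := by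
    intro t ht
    have hint_t : IntervalIntegrable g volume ta t :=
      (intervalIntegrable_iff_integrableOn_Ioc_of_le ht.1).mpr
        (hgint'.mono_set (Ioc_subset_Ioc le_rfl ht.2.le))
    have hmeas : AEStronglyMeasurable g (volume.restrict (Ioo t tb)) :=
      hgint'.aestronglyMeasurable.mono_measure
        (Measure.restrict_mono (show Ioo t tb ⊆ Ioc ta tb from
          fun r hr => ⟨lt_of_le_of_lt ht.1 hr.1, hr.2.le⟩) le_rfl)
    have hDcwa : ContinuousWithinAt D (Ioi t) t := by
      refine (hDc t ⟨ht.1, ht.2.le⟩).mono_of_mem_nhdsWithin ?_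
      have h2 : Ioo t tb ∈ nhdsWithin t (Ioi t) := Ioo_mem_nhdsGT_of_mem ⟨le_refl t, ht.2⟩
      exact Filter.mem_of_superset h2 (fun r hr => ⟨ht.1.trans hr.1.le, hr.2.le⟩)
    have hgc : ContinuousWithinAt g (Ioi t) t :=
      cwa_mx_mul ((hCrc t ht).mono Ioi_subset_Ici_self) hDcwa
    exact primitive_hasDerivWithinAt_right (ta := ta) (tb' := tb) ht hint_t hmeas hgc
  have hFa : ‖F ta‖ ≤ 0 := by
    simp [hFdef, intervalIntegral.integral_same]
  have hbound : ∀ t ∈ Ico ta tb, ‖g t‖ ≤ K1 * ‖F t‖ + 0 := by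
    intro t ht
    have h3 : D t = F t := hFD t ⟨ht.1, ht.2.le⟩
    rw [add_zero, hK1, ← h3]
    calc ‖g t‖ ≤ d * ‖C t‖ * ‖D t‖ := mx_norm_mul_le _ _
      _ ≤ d * K0 * ‖D t‖ := by
          have h2 := hCbd t ht
          gcongr <;> first
            | exact mul_nonneg (Nat.cast_nonneg d) ((norm_nonneg _).trans h2)
            | exact (norm_nonneg _).trans h2
            | exact h2
  have hgron := norm_le_gronwallBound_of_norm_deriv_right_le hFcont hder hFa hbound
  intro s hs
  have h1 := hgron s hs
  rw [gronwallBound_ε0, zero_mul] at h1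
  have h2 : ‖D s‖ ≤ 0 := by rw [hFD s hs]; exact h1
  exact norm_le_zero_iff.mp h2

variable {nn mm : ℕ}

/-- quadratic form conjugation identity used for the node formula. -/
lemma conj_integrand (M A Qm Φv : Matrix (Fin nn) (Fin nn) ℝ)
    (W : Matrix (Fin mm) (Fin nn) ℝ) (R' : Matrix (Fin mm) (Fin mm) ℝ)
    (h : Φv = A * M) :
    Mᵀ * (Aᵀ * Qm * A + (W * A)ᵀ * R' * (W * A)) * M
      = Φvᵀ * Qm * Φv + (W * Φv)ᵀ * R' * (W * Φv) := by
  subst h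
  simp only [Matrix.transpose_mul, Matrix.mul_add, Matrix.add_mul, Matrix.mul_assoc]

/-- The Riccati derivative algebra. -/
lemma riccati_deriv_alg (P Am Qm Φv : Matrix (Fin nn) (Fin nn) ℝ)
    (Bm : Matrix (Fin nn) (Fin mm) ℝ) (Rm : Matrix (Fin mm) (Fin mm) ℝ)
    (hRinvT : (Rm⁻¹)ᵀ = Rm⁻¹) (hRR : Rm * Rm⁻¹ = 1) :
    ((Am - Bm * Rm⁻¹ * Bmᵀ * P) * Φv)ᵀ * P * Φv
      + Φvᵀ * (-(P * Am + Amᵀ * P + Qm - P * Bm * Rm⁻¹ * Bmᵀ * P)) * Φv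
      + Φvᵀ * P * ((Am - Bm * Rm⁻¹ * Bmᵀ * P) * Φv)
      = -(Φvᵀ * Qm * Φv
          + (Rm⁻¹ * Bmᵀ * P * Φv)ᵀ * Rm * (Rm⁻¹ * Bmᵀ * P * Φv)) := by
  have hpsi : (Rm⁻¹ * Bmᵀ * P * Φv)ᵀ * Rm * (Rm⁻¹ * Bmᵀ * P * Φv)
      = Φvᵀ * (Pᵀ * Bm * Rm⁻¹ * Bmᵀ * P) * Φv := by
    calc (Rm⁻¹ * Bmᵀ * P * Φv)ᵀ * Rm * (Rm⁻¹ * Bmᵀ * P * Φv)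
        = Φvᵀ * Pᵀ * Bm * (Rm⁻¹ * (Rm * (Rm⁻¹ * (Bmᵀ * (P * Φv))))) := by
          simp only [Matrix.transpose_mul, Matrix.transpose_transpose, hRinvT, Matrix.mul_assoc]
      _ = Φvᵀ * Pᵀ * Bm * (Rm⁻¹ * (Bmᵀ * (P * Φv))) := by
          rw [← Matrix.mul_assoc Rm Rm⁻¹, hRR, Matrix.one_mul]
      _ = Φvᵀ * (Pᵀ * Bm * Rm⁻¹ * Bmᵀ * P) * Φv := by
          simp only [Matrix.mul_assoc]
  rw [hpsi]
  have hmid : ((Am - Bm * Rm⁻¹ * Bmᵀ * P))ᵀ * P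
      + (-(P * Am + Amᵀ * P + Qm - P * Bm * Rm⁻¹ * Bmᵀ * P))
      + P * (Am - Bm * Rm⁻¹ * Bmᵀ * P)
      = -(Qm + Pᵀ * Bm * Rm⁻¹ * Bmᵀ * P) := by
    simp only [Matrix.transpose_sub, Matrix.transpose_mul, Matrix.transpose_transpose, hRinvT]
    noncomm_ring
    simp only [Matrix.mul_assoc]
    abel
  calc ((Am - Bm * Rm⁻¹ * Bmᵀ * P) * Φv)ᵀ * P * Φv
      + Φvᵀ * (-(P * Am + Amᵀ * P + Qm - P * Bm * Rm⁻¹ * Bmᵀ * P)) * Φv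
      + Φvᵀ * P * ((Am - Bm * Rm⁻¹ * Bmᵀ * P) * Φv)
      = Φvᵀ * (((Am - Bm * Rm⁻¹ * Bmᵀ * P))ᵀ * P
          + (-(P * Am + Amᵀ * P + Qm - P * Bm * Rm⁻¹ * Bmᵀ * P))
          + P * (Am - Bm * Rm⁻¹ * Bmᵀ * P)) * Φv := by
        simp only [Matrix.transpose_mul, Matrix.add_mul, Matrix.mul_add, Matrix.mul_assoc]
    _ = Φvᵀ * (-(Qm + Pᵀ * Bm * Rm⁻¹ * Bmᵀ * P)) * Φv := by rw [hmid]
    _ = -(Φvᵀ * Qm * Φv + Φvᵀ * (Pᵀ * Bm * Rm⁻¹ * Bmᵀ * P) * Φv) := by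
        simp only [Matrix.mul_add, Matrix.add_mul, Matrix.neg_mul, Matrix.mul_neg, neg_add]

/-- derivative of transpose -/
lemma hasDerivAt_mx_transpose {a b : ℕ} {f : ℝ → Matrix (Fin a) (Fin b) ℝ}
    {f' : Matrix (Fin a) (Fin b) ℝ} {x : ℝ} (hf : HasDerivAt f f' x) :
    HasDerivAt (fun t => (f t)ᵀ) f'ᵀ x := by
  have h := (transCLM (a := a) (b := b)).hasFDerivAt.comp_hasDerivAt x hf
  simpa [Function.comp_def] using h

end Stmt3Aux

end MxTopSec
open Stmt3Aux
/-- `tp` enumerates a partition `Δ : 0 = t₀ < t₁ < ⋯ < t_N = T` of `[0,T]`. -/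
def IsPartition (T : ℝ) (N : ℕ) (tp : ℕ → ℝ) : Prop :=
  0 < N ∧ tp 0 = 0 ∧ tp N = T ∧ ∀ k < N, tp k < tp (k + 1)

/-- `AΔ, BΔ, QΔ, RΔ` are the piecewise frozen coefficients of `A, B, Q, R`
associated with the partition `tp` (freezing the first variable at `t_{k-1}`). -/
def IsFrozen (n m : ℕ) (N : ℕ) (tp : ℕ → ℝ)
    (A : ℝ → ℝ → Matrix (Fin n) (Fin n) ℝ) (B : ℝ → ℝ → Matrix (Fin n) (Fin m) ℝ)
    (Q : ℝ → ℝ → Matrix (Fin n) (Fin n) ℝ) (R : ℝ → ℝ → Matrix (Fin m) (Fin m) ℝ)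
    (AΔ : ℝ → Matrix (Fin n) (Fin n) ℝ) (BΔ : ℝ → Matrix (Fin n) (Fin m) ℝ)
    (QΔ : ℝ → Matrix (Fin n) (Fin n) ℝ) (RΔ : ℝ → Matrix (Fin m) (Fin m) ℝ) : Prop :=
  ∀ k < N, ∀ s ∈ Ico (tp k) (tp (k + 1)),
    AΔ s = A (tp k) s ∧ BΔ s = B (tp k) s ∧ QΔ s = Q (tp k) s ∧ RΔ s = R (tp k) s

/-- `PΔ` (together with the closed-loop fundamental solutions `Φ k = Φ^Δ(·;t_k)`)
is the piecewise Riccati function characterizing the equilibrium of Problem (LQ^Δ):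
it is right-continuous on each `[t_{k-1},t_k)` and solves the Riccati ODE on each
`(t_{k-1},t_k)`, with `P^Δ(T) = G(t_{N-1})` and left limits at each node `t_k`
(`1 ≤ k ≤ N`) given by
`P^Δ(t_k−0) = Φ^Δ(T;t_k)ᵀG(t_{k−1})Φ^Δ(T;t_k) + ∫_{t_k}^T [Φ^ΔᵀQ(t_{k−1},·)Φ^Δ + Ψ^ΔᵀR(t_{k−1},·)Ψ^Δ]`,
where `Φ^Δ(·;t_k)` solves `∂_sΦ = [A^Δ − B^Δ(R^Δ)⁻¹(B^Δ)ᵀP^Δ]Φ`, `Φ(t_k;t_k) = I`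
(in Volterra integral form) and `Ψ^Δ(s;t_k) = −R^Δ(s)⁻¹B^Δ(s)ᵀP^Δ(s)Φ^Δ(s;t_k)`. -/
noncomputable def IsPiecewiseRiccati (n m : ℕ) (N : ℕ) (T : ℝ) (tp : ℕ → ℝ)
    (Q : ℝ → ℝ → Matrix (Fin n) (Fin n) ℝ) (R : ℝ → ℝ → Matrix (Fin m) (Fin m) ℝ)
    (G : ℝ → Matrix (Fin n) (Fin n) ℝ)
    (AΔ : ℝ → Matrix (Fin n) (Fin n) ℝ) (BΔ : ℝ → Matrix (Fin n) (Fin m) ℝ)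
    (QΔ : ℝ → Matrix (Fin n) (Fin n) ℝ) (RΔ : ℝ → Matrix (Fin m) (Fin m) ℝ)
    (PΔ : ℝ → Matrix (Fin n) (Fin n) ℝ) (Φ : ℕ → ℝ → Matrix (Fin n) (Fin n) ℝ) :
    Prop :=
  (∀ k < N, ContinuousOn PΔ (Ico (tp k) (tp (k + 1)))) ∧
  PΔ T = G (tp (N - 1)) ∧
  (∀ k < N, ∀ s ∈ Ioo (tp k) (tp (k + 1)),
    HasDerivAt PΔ
      (-(PΔ s * AΔ s + (AΔ s)ᵀ * PΔ s + QΔ s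
          - PΔ s * BΔ s * (RΔ s)⁻¹ * (BΔ s)ᵀ * PΔ s)) s) ∧
  (∀ k ≤ N, ∀ s ∈ Icc (tp k) T,
    Φ k s = 1 + ∫ r in (tp k)..s,
      (AΔ r - BΔ r * (RΔ r)⁻¹ * (BΔ r)ᵀ * PΔ r) * Φ k r) ∧
  (∀ k, 1 ≤ k → k ≤ N →
    Filter.Tendsto PΔ (nhdsWithin (tp k) (Iio (tp k))) (nhds
      ((Φ k T)ᵀ * G (tp (k - 1)) * Φ k T
        + ∫ s in (tp k)..T,
            ((Φ k s)ᵀ * Q (tp (k - 1)) s * Φ k s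
              + ((RΔ s)⁻¹ * (BΔ s)ᵀ * PΔ s * Φ k s)ᵀ * R (tp (k - 1)) s
                  * ((RΔ s)⁻¹ * (BΔ s)ᵀ * PΔ s * Φ k s)))))

section MxTopSec2

attribute [local instance] mxTopInst

noncomputable def IsPiecewiseRiccatiMx (n m : ℕ) (N : ℕ) (T : ℝ) (tp : ℕ → ℝ)
    (Q : ℝ → ℝ → Matrix (Fin n) (Fin n) ℝ) (R : ℝ → ℝ → Matrix (Fin m) (Fin m) ℝ)
    (G : ℝ → Matrix (Fin n) (Fin n) ℝ)
    (AΔ : ℝ → Matrix (Fin n) (Fin n) ℝ) (BΔ : ℝ → Matrix (Fin n) (Fin m) ℝ)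
    (QΔ : ℝ → Matrix (Fin n) (Fin n) ℝ) (RΔ : ℝ → Matrix (Fin m) (Fin m) ℝ)
    (PΔ : ℝ → Matrix (Fin n) (Fin n) ℝ) (Φ : ℕ → ℝ → Matrix (Fin n) (Fin n) ℝ) :
    Prop :=
  (∀ k < N, ContinuousOn PΔ (Ico (tp k) (tp (k + 1)))) ∧
  PΔ T = G (tp (N - 1)) ∧
  (∀ k < N, ∀ s ∈ Ioo (tp k) (tp (k + 1)),
    HasDerivAt PΔ
      (-(PΔ s * AΔ s + (AΔ s)ᵀ * PΔ s + QΔ s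
          - PΔ s * BΔ s * (RΔ s)⁻¹ * (BΔ s)ᵀ * PΔ s)) s) ∧
  (∀ k ≤ N, ∀ s ∈ Icc (tp k) T,
    Φ k s = 1 + ∫ r in (tp k)..s,
      (AΔ r - BΔ r * (RΔ r)⁻¹ * (BΔ r)ᵀ * PΔ r) * Φ k r) ∧
  (∀ k, 1 ≤ k → k ≤ N →
    Filter.Tendsto PΔ (nhdsWithin (tp k) (Iio (tp k))) (nhds
      ((Φ k T)ᵀ * G (tp (k - 1)) * Φ k T
        + ∫ s in (tp k)..T,
            ((Φ k s)ᵀ * Q (tp (k - 1)) s * Φ k s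
              + ((RΔ s)⁻¹ * (BΔ s)ᵀ * PΔ s * Φ k s)ᵀ * R (tp (k - 1)) s
                  * ((RΔ s)⁻¹ * (BΔ s)ᵀ * PΔ s * Φ k s)))))

theorem stmt_3_mx (n m : ℕ) (T L δ : ℝ) (hT : 0 < T) (hL : 0 < L) (hδ : 0 < δ)
    (A : ℝ → ℝ → Matrix (Fin n) (Fin n) ℝ) (B : ℝ → ℝ → Matrix (Fin n) (Fin m) ℝ)
    (Q : ℝ → ℝ → Matrix (Fin n) (Fin n) ℝ) (R : ℝ → ℝ → Matrix (Fin m) (Fin m) ℝ)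
    (G : ℝ → Matrix (Fin n) (Fin n) ℝ)
    -- (H1): continuity
    (hAc : ContinuousOn (fun p : ℝ × ℝ => A p.1 p.2) (Icc 0 T ×ˢ Icc 0 T))
    (hBc : ContinuousOn (fun p : ℝ × ℝ => B p.1 p.2) (Icc 0 T ×ˢ Icc 0 T))
    (hQc : ContinuousOn (fun p : ℝ × ℝ => Q p.1 p.2) (Icc 0 T ×ˢ Icc 0 T))
    (hRc : ContinuousOn (fun p : ℝ × ℝ => R p.1 p.2) (Icc 0 T ×ˢ Icc 0 T))
    (hGc : ContinuousOn G (Icc 0 T))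
    -- (H1): Lipschitz continuity in the first variable
    (hLip : ∀ t ∈ Icc (0:ℝ) T, ∀ r ∈ Icc (0:ℝ) T, ∀ s ∈ Icc (0:ℝ) T,
      ‖A t s - A r s‖ + ‖B t s - B r s‖ + ‖Q t s - Q r s‖ + ‖R t s - R r s‖
          + ‖G t - G r‖ ≤ L * |t - r|)
    -- (H1): positivity
    (hQ : ∀ t ∈ Icc (0:ℝ) T, ∀ s ∈ Icc (0:ℝ) T, (Q t s).PosSemidef)
    (hG : ∀ t ∈ Icc (0:ℝ) T, (G t).PosSemidef)
    (hR : ∀ t ∈ Icc (0:ℝ) T, ∀ s ∈ Icc (0:ℝ) T,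
      (R t s - δ • (1 : Matrix (Fin m) (Fin m) ℝ)).PosSemidef)
    -- (H2): monotonicity in the first variable
    (hGm : ∀ t r : ℝ, 0 ≤ t → t ≤ r → r ≤ T → (G r - G t).PosSemidef)
    (hQm : ∀ t r s : ℝ, 0 ≤ t → t ≤ r → r ≤ s → s ≤ T → (Q r s - Q t s).PosSemidef)
    (hRm : ∀ t r s : ℝ, 0 ≤ t → t ≤ r → r ≤ s → s ≤ T → (R r s - R t s).PosSemidef)
    (N : ℕ) (tp : ℕ → ℝ) (hpart : IsPartition T N tp)
    (AΔ : ℝ → Matrix (Fin n) (Fin n) ℝ) (BΔ : ℝ → Matrix (Fin n) (Fin m) ℝ)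
    (QΔ : ℝ → Matrix (Fin n) (Fin n) ℝ) (RΔ : ℝ → Matrix (Fin m) (Fin m) ℝ)
    (hfroz : IsFrozen n m N tp A B Q R AΔ BΔ QΔ RΔ)
    (PΔ : ℝ → Matrix (Fin n) (Fin n) ℝ) (Φ : ℕ → ℝ → Matrix (Fin n) (Fin n) ℝ)
    (hPΔ : IsPiecewiseRiccatiMx n m N T tp Q R G AΔ BΔ QΔ RΔ PΔ Φ) :
    ∀ k, 1 ≤ k → k < N →
      ∃ Pp Pm : Matrix (Fin n) (Fin n) ℝ,
        Filter.Tendsto PΔ (nhdsWithin (tp k) (Ioi (tp k))) (nhds Pp) ∧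
        Filter.Tendsto PΔ (nhdsWithin (tp k) (Iio (tp k))) (nhds Pm) ∧
        Pp - Pm
          = (Φ k T)ᵀ * (G (tp k) - G (tp (k - 1))) * Φ k T
            + ∫ s in (tp k)..T,
                ((Φ k s)ᵀ * (Q (tp k) s - Q (tp (k - 1)) s) * Φ k s
                  + ((RΔ s)⁻¹ * (BΔ s)ᵀ * PΔ s * Φ k s)ᵀ
                      * (R (tp k) s - R (tp (k - 1)) s)
                      * ((RΔ s)⁻¹ * (BΔ s)ᵀ * PΔ s * Φ k s)) ∧
        (Pp - Pm).PosSemidef := by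

  classical
  obtain ⟨hN, htp0, htpN, htplt⟩ := hpart
  obtain ⟨hPcont, hPT, hPode, hPhi, hPlim⟩ := hPΔ
  -- partition facts
  have tp_le : ∀ {i j : ℕ}, i ≤ j → j ≤ N → tp i ≤ tp j := by
    intro i j hij hjN
    induction j with
    | zero => exact le_of_eq (by rw [Nat.le_zero.mp hij])
    | succ j ih =>
      rcases Nat.eq_or_lt_of_le hij with h | h
      · rw [h]
      · exact le_trans (ih (Nat.lt_succ_iff.mp h) (le_trans (Nat.le_succ j) hjN))
          (htplt j (Nat.lt_of_succ_le hjN)).le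
  have tp_mem : ∀ j, j ≤ N → tp j ∈ Icc (0:ℝ) T := by
    intro j hj
    constructor
    · rw [← htp0]; exact tp_le (Nat.zero_le j) hj
    · rw [← htpN]; exact tp_le hj le_rfl
  have piece_sub_Icc : ∀ j, j < N → Icc (tp j) (tp (j+1)) ⊆ Icc (0:ℝ) T := by
    intro j hj
    exact Icc_subset_Icc (tp_mem j hj.le).1 (tp_mem (j+1) hj).2
  -- positive definiteness of R and consequences
  have hRpd : ∀ t ∈ Icc (0:ℝ) T, ∀ s ∈ Icc (0:ℝ) T, (R t s).PosDef := by
    intro t ht s hs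
    have h2 : (δ • (1 : Matrix (Fin m) (Fin m) ℝ)).PosDef := by
      rw [Matrix.smul_one_eq_diagonal]
      exact Matrix.PosDef.diagonal (fun _ => hδ)
    have h3 := Matrix.PosDef.posSemidef_add (hR t ht s hs) h2
    simpa using h3
  have hRsym : ∀ t ∈ Icc (0:ℝ) T, ∀ s ∈ Icc (0:ℝ) T, (R t s)ᵀ = R t s := by
    intro t ht s hs
    have h := (hRpd t ht s hs).isHermitian
    rwa [Matrix.IsHermitian, Matrix.conjTranspose_eq_transpose_of_trivial] at h
  have hRdet : ∀ t ∈ Icc (0:ℝ) T, ∀ s ∈ Icc (0:ℝ) T, IsUnit (R t s).det := by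
    intro t ht s hs
    exact isUnit_iff_ne_zero.mpr (hRpd t ht s hs).det_pos.ne'
  have hRmulinv : ∀ t ∈ Icc (0:ℝ) T, ∀ s ∈ Icc (0:ℝ) T, R t s * (R t s)⁻¹ = 1 := by
    intro t ht s hs
    exact Matrix.mul_nonsing_inv _ (hRdet t ht s hs)
  have hRinvT : ∀ t ∈ Icc (0:ℝ) T, ∀ s ∈ Icc (0:ℝ) T, ((R t s)⁻¹)ᵀ = (R t s)⁻¹ := by
    intro t ht s hs
    rw [Matrix.transpose_nonsing_inv, hRsym t ht s hs]
  -- continuity in second variable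
  have hAt : ∀ t ∈ Icc (0:ℝ) T, ContinuousOn (A t) (Icc (0:ℝ) T) := by
    intro t ht
    exact hAc.comp ((continuous_const.prodMk continuous_id).continuousOn)
      (fun s hs => ⟨ht, hs⟩)
  have hBt : ∀ t ∈ Icc (0:ℝ) T, ContinuousOn (B t) (Icc (0:ℝ) T) := by
    intro t ht
    exact hBc.comp ((continuous_const.prodMk continuous_id).continuousOn)
      (fun s hs => ⟨ht, hs⟩)
  have hQt : ∀ t ∈ Icc (0:ℝ) T, ContinuousOn (Q t) (Icc (0:ℝ) T) := by
    intro t ht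
    exact hQc.comp ((continuous_const.prodMk continuous_id).continuousOn)
      (fun s hs => ⟨ht, hs⟩)
  have hRt : ∀ t ∈ Icc (0:ℝ) T, ContinuousOn (R t) (Icc (0:ℝ) T) := by
    intro t ht
    exact hRc.comp ((continuous_const.prodMk continuous_id).continuousOn)
      (fun s hs => ⟨ht, hs⟩)
  have hRinvt : ∀ t ∈ Icc (0:ℝ) T, ContinuousOn (fun s => (R t s)⁻¹) (Icc (0:ℝ) T) := by
    intro t ht
    have hdet : ContinuousOn (fun s => (R t s).det) (Icc (0:ℝ) T) :=
      (continuous_id.matrix_det).comp_continuousOn (hRt t ht)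
    have hadj : ContinuousOn (fun s => (R t s).adjugate) (Icc (0:ℝ) T) :=
      (continuous_id.matrix_adjugate).comp_continuousOn (hRt t ht)
    have hinv : ContinuousOn (fun s => ((R t s).det)⁻¹ • (R t s).adjugate) (Icc (0:ℝ) T) :=
      (hdet.inv₀ (fun s hs => (hRpd t ht s hs).det_pos.ne')).smul hadj
    refine ContinuousOn.congr hinv ?_
    intro s _
    show (R t s)⁻¹ = ((R t s).det)⁻¹ • (R t s).adjugate
    rw [Matrix.inv_def, Ring.inverse_eq_inv]
  -- the left limits
  have hPlim' : ∀ j, j < N → Filter.Tendsto PΔ (nhdsWithin (tp (j+1)) (Iio (tp (j+1))))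
      (nhds ((Φ (j+1) T)ᵀ * G (tp j) * Φ (j+1) T
        + ∫ s in (tp (j+1))..T,
            ((Φ (j+1) s)ᵀ * Q (tp j) s * Φ (j+1) s
              + ((RΔ s)⁻¹ * (BΔ s)ᵀ * PΔ s * Φ (j+1) s)ᵀ * R (tp j) s
                  * ((RΔ s)⁻¹ * (BΔ s)ᵀ * PΔ s * Φ (j+1) s)))) := by
    intro j hj
    have h := hPlim (j+1) (Nat.le_add_left 1 j) (Nat.succ_le_of_lt hj)
    simpa using h
  -- extended P on each piece
  set Pext : ℕ → ℝ → Matrix (Fin n) (Fin n) ℝ := fun j =>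
    Function.update PΔ (tp (j+1))
      ((Φ (j+1) T)ᵀ * G (tp j) * Φ (j+1) T
        + ∫ s in (tp (j+1))..T,
            ((Φ (j+1) s)ᵀ * Q (tp j) s * Φ (j+1) s
              + ((RΔ s)⁻¹ * (BΔ s)ᵀ * PΔ s * Φ (j+1) s)ᵀ * R (tp j) s
                  * ((RΔ s)⁻¹ * (BΔ s)ᵀ * PΔ s * Φ (j+1) s))) with hPextdef
  have hPext_eq : ∀ j, j < N → ∀ s ∈ Ico (tp j) (tp (j+1)), Pext j s = PΔ s := by
    intro j hj s hs
    exact Function.update_of_ne (ne_of_lt hs.2) _ _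
  have hPext_cont : ∀ j, j < N → ContinuousOn (Pext j) (Icc (tp j) (tp (j+1))) := by
    intro j hj
    have hab : tp j < tp (j+1) := htplt j hj
    intro s hs
    rcases eq_or_lt_of_le hs.2 with h | h
    · subst h
      have hsplit : Icc (tp j) (tp (j+1)) = Ico (tp j) (tp (j+1)) ∪ {tp (j+1)} :=
        (Ico_union_right hab.le).symm
      rw [ContinuousWithinAt, hsplit]
      rw [nhdsWithin_union]
      rw [Filter.tendsto_sup]
      constructor
      · have hval : Pext j (tp (j+1)) = (Φ (j+1) T)ᵀ * G (tp j) * Φ (j+1) T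
            + ∫ s in (tp (j+1))..T,
                ((Φ (j+1) s)ᵀ * Q (tp j) s * Φ (j+1) s
                  + ((RΔ s)⁻¹ * (BΔ s)ᵀ * PΔ s * Φ (j+1) s)ᵀ * R (tp j) s
                      * ((RΔ s)⁻¹ * (BΔ s)ᵀ * PΔ s * Φ (j+1) s)) :=
          Function.update_self _ _ _
        rw [hval]
        refine Filter.Tendsto.congr' ?_
          ((hPlim' j hj).mono_left (nhdsWithin_mono _ (fun r hr => hr.2)))
        filter_upwards [self_mem_nhdsWithin] with r hr
        exact (hPext_eq j hj r hr).symm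
      · rw [nhdsWithin_singleton]
        exact tendsto_pure_nhds (Pext j) _
    · have h1 : ContinuousWithinAt PΔ (Ico (tp j) (tp (j+1))) s := hPcont j hj s ⟨hs.1, h⟩
      have hfil : nhdsWithin s (Icc (tp j) (tp (j+1))) = nhdsWithin s (Ico (tp j) (tp (j+1))) := by
        rw [nhdsWithin_restrict' (Icc (tp j) (tp (j+1))) (Iio_mem_nhds h)]
        congr 1
        ext r
        simp only [mem_inter_iff, mem_Icc, mem_Iio, mem_Ico]
        exact ⟨fun hh => ⟨hh.1.1, hh.2⟩, fun hh => ⟨⟨hh.1, hh.2.le⟩, hh.2⟩⟩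
      rw [ContinuousWithinAt, hfil, hPext_eq j hj s ⟨hs.1, h⟩]
      refine Filter.Tendsto.congr' ?_ h1
      filter_upwards [self_mem_nhdsWithin] with r hr
      exact (hPext_eq j hj r hr).symm
  -- the closed-loop coefficient
  set Cfun : ℝ → Matrix (Fin n) (Fin n) ℝ :=
    fun r => AΔ r - BΔ r * (RΔ r)⁻¹ * (BΔ r)ᵀ * PΔ r with hCfundef
  set Cext : ℕ → ℝ → Matrix (Fin n) (Fin n) ℝ := fun j s =>
    A (tp j) s - B (tp j) s * (R (tp j) s)⁻¹ * (B (tp j) s)ᵀ * Pext j s with hCextdef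
  have hCfun_eq : ∀ j, j < N → ∀ s ∈ Ico (tp j) (tp (j+1)), Cfun s = Cext j s := by
    intro j hj s hs
    obtain ⟨hA', hB', hQ', hR'⟩ := hfroz j hj s hs
    simp only [hCfundef, hCextdef, hA', hB', hR', hPext_eq j hj s hs]
  have hCext_cont : ∀ j, j < N → ContinuousOn (Cext j) (Icc (tp j) (tp (j+1))) := by
    intro j hj
    have hsub := piece_sub_Icc j hj
    have htpj := tp_mem j hj.le
    exact ((hAt (tp j) htpj).mono hsub).sub
      (Stmt3Aux.con_mx_mul (Stmt3Aux.con_mx_mul (Stmt3Aux.con_mx_mul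
        ((hBt (tp j) htpj).mono hsub) ((hRinvt (tp j) htpj).mono hsub))
        (Stmt3Aux.continuous_transpose.comp_continuousOn ((hBt (tp j) htpj).mono hsub)))
        (hPext_cont j hj))
  -- cover of [0,T)
  have cover : ∀ x ∈ Ico (0:ℝ) T, ∃ j, j < N ∧ x ∈ Ico (tp j) (tp (j+1)) := by
    intro x hx
    have key : ∀ M, M ≤ N → x < tp M → ∃ j, j < M ∧ x ∈ Ico (tp j) (tp (j+1)) := by
      intro M
      induction M with
      | zero => intro _ h; rw [htp0] at h; exact absurd hx.1 (not_le.mpr h)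
      | succ M ih =>
        intro hMN hxM
        by_cases hM : tp M ≤ x
        · exact ⟨M, Nat.lt_succ_self M, hM, hxM⟩
        · obtain ⟨j, hj1, hj2⟩ := ih (le_trans (Nat.le_succ M) hMN) (not_le.mp hM)
          exact ⟨j, Nat.lt_succ_of_lt hj1, hj2⟩
    have := key N le_rfl (by rw [htpN]; exact hx.2)
    exact this
  -- global bound on Cfun
  have hCbd_glob : ∃ K0 : ℝ, 0 ≤ K0 ∧ ∀ r ∈ Ico (0:ℝ) T, ‖Cfun r‖ ≤ K0 := by
    have hKex : ∀ j, ∃ K, j < N → ∀ r ∈ Ico (tp j) (tp (j+1)), ‖Cfun r‖ ≤ K := by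
      intro j
      by_cases hj : j < N
      · obtain ⟨K, hK⟩ := isCompact_Icc.exists_bound_of_continuousOn (hCext_cont j hj)
        exact ⟨K, fun _ r hr => by
          rw [hCfun_eq j hj r hr]; exact hK r (Ico_subset_Icc_self hr)⟩
      · exact ⟨0, fun h => absurd h hj⟩
    choose Kf hKf using hKex
    refine ⟨max 0 (((Finset.range N).image Kf).max'
      (Finset.Nonempty.image (Finset.nonempty_range_iff.mpr hN.ne') Kf)), le_max_left _ _, ?_⟩
    intro r hr
    obtain ⟨j, hj, hrj⟩ := cover r hr
    refine le_trans (hKf j hj r hrj) (le_trans (Finset.le_max' _ _ ?_) (le_max_right _ _))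
    exact Finset.mem_image_of_mem Kf (Finset.mem_range.mpr hj)
  obtain ⟨K0, hK00, hCbd_glob⟩ := hCbd_glob
  -- right continuity of Cfun
  have hCrc_glob : ∀ t ∈ Ico (0:ℝ) T, ContinuousWithinAt Cfun (Ici t) t := by
    intro t ht
    obtain ⟨j, hj, htj⟩ := cover t ht
    have hmem2 : Ico (tp j) (tp (j+1)) ∈ nhdsWithin t (Ici t) := by
      refine Filter.mem_of_superset (Filter.inter_mem
        (mem_nhdsWithin_of_mem_nhds (Iio_mem_nhds htj.2)) self_mem_nhdsWithin) ?_
      rintro r ⟨hr1, hr2⟩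
      exact ⟨le_trans htj.1 hr2, hr1⟩
    have h2 : ContinuousWithinAt (Cext j) (Ici t) t :=
      (hCext_cont j hj t (Ico_subset_Icc_self htj)).mono_of_mem_nhdsWithin
        (Filter.mem_of_superset hmem2 Ico_subset_Icc_self)
    refine h2.congr_of_eventuallyEq ?_ (hCfun_eq j hj t htj)
    filter_upwards [hmem2] with r hr
    exact hCfun_eq j hj r hr
  -- measurability of Cfun
  have hCm_glob : AEStronglyMeasurable Cfun (volume.restrict (Ico (0:ℝ) T)) := by
    have hunion : Ico (0:ℝ) T = ⋃ j, (fun j => if j < N then Ico (tp j) (tp (j+1)) else ∅) j := by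
      ext x
      simp only [mem_iUnion]
      constructor
      · intro hx
        obtain ⟨j, hj, hxj⟩ := cover x hx
        exact ⟨j, by simp only [if_pos hj]; exact hxj⟩
      · rintro ⟨j, hxj⟩
        by_cases hj : j < N
        · simp only [if_pos hj] at hxj
          exact ⟨(tp_mem j hj.le).1.trans hxj.1, lt_of_lt_of_le hxj.2 (tp_mem (j+1) hj).2⟩
        · simp only [if_neg hj] at hxj
          exact absurd hxj (notMem_empty x)
    rw [hunion, aestronglyMeasurable_iUnion_iff]
    intro j
    by_cases hj : j < N
    · simp only [if_pos hj]
      refine AEStronglyMeasurable.congr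
        (((hCext_cont j hj).mono Ico_subset_Icc_self).aestronglyMeasurable
          measurableSet_Ico) ?_
      filter_upwards [ae_restrict_mem measurableSet_Ico] with r hr
      exact (hCfun_eq j hj r hr).symm
    · simp only [if_neg hj]
      rw [Measure.restrict_empty]
      exact aestronglyMeasurable_zero_measure Cfun
  -- Volterra package for each Φ x
  have hVol : ∀ x, x ≤ N →
      IntegrableOn (fun r => Cfun r * Φ x r) (Ioc (tp x) T) ∧
        ContinuousOn (Φ x) (Icc (tp x) T) ∧
        (∀ t ∈ Icc (tp x) T, ‖Φ x t‖ ≤ Real.exp ((n * K0) * (T - tp x))) := by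
    intro x hx
    have hsub : Ico (tp x) T ⊆ Ico (0:ℝ) T := fun r hr => ⟨(tp_mem x hx).1.trans hr.1, hr.2⟩
    exact Stmt3Aux.volterra_main (tp_mem x hx).2 hK00
      (hCm_glob.mono_measure (Measure.restrict_mono hsub le_rfl))
      (fun r hr => hCbd_glob r (hsub hr))
      (fun t ht => hCrc_glob t (hsub ht))
      (hPhi x hx)
  -- integrability of the quadratic integrands
  have hJIoc : ∀ (t' : ℝ), t' ∈ Icc (0:ℝ) T → ∀ x, x ≤ N →
      IntegrableOn (fun s => (Φ x s)ᵀ * Q t' s * Φ x s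
        + ((RΔ s)⁻¹ * (BΔ s)ᵀ * PΔ s * Φ x s)ᵀ * R t' s
            * ((RΔ s)⁻¹ * (BΔ s)ᵀ * PΔ s * Φ x s)) (Ioc (tp x) T) := by
    intro t' ht' x hx
    rw [integrableOn_Ioc_iff_integrableOn_Ioo]
    have hΦT := (hVol x hx).2.1
    have hpiece : ∀ j, x ≤ j → j < N →
        IntegrableOn (fun s => (Φ x s)ᵀ * Q t' s * Φ x s
          + ((RΔ s)⁻¹ * (BΔ s)ᵀ * PΔ s * Φ x s)ᵀ * R t' s
              * ((RΔ s)⁻¹ * (BΔ s)ᵀ * PΔ s * Φ x s)) (Ico (tp j) (tp (j+1))) := by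
      intro j hxj hj
      have hsub := piece_sub_Icc j hj
      have htpj := tp_mem j hj.le
      have hsubx : Icc (tp j) (tp (j+1)) ⊆ Icc (tp x) T :=
        Icc_subset_Icc (tp_le hxj hj.le) (tp_mem (j+1) hj).2
      have hΦc : ContinuousOn (Φ x) (Icc (tp j) (tp (j+1))) := hΦT.mono hsubx
      have hΦtc : ContinuousOn (fun s => (Φ x s)ᵀ) (Icc (tp j) (tp (j+1))) :=
        Stmt3Aux.continuous_transpose.comp_continuousOn hΦc
      have hPsi : ContinuousOn
          (fun s => (R (tp j) s)⁻¹ * (B (tp j) s)ᵀ * Pext j s * Φ x s)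
          (Icc (tp j) (tp (j+1))) :=
        Stmt3Aux.con_mx_mul (Stmt3Aux.con_mx_mul (Stmt3Aux.con_mx_mul
          ((hRinvt (tp j) htpj).mono hsub)
          (Stmt3Aux.continuous_transpose.comp_continuousOn ((hBt (tp j) htpj).mono hsub)))
          (hPext_cont j hj)) hΦc
      have hJm : ContinuousOn (fun s =>
          (Φ x s)ᵀ * Q t' s * Φ x s
            + ((R (tp j) s)⁻¹ * (B (tp j) s)ᵀ * Pext j s * Φ x s)ᵀ * R t' s
                * ((R (tp j) s)⁻¹ * (B (tp j) s)ᵀ * Pext j s * Φ x s))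
          (Icc (tp j) (tp (j+1))) := by
        refine ContinuousOn.add ?_ ?_
        · exact Stmt3Aux.con_mx_mul (Stmt3Aux.con_mx_mul hΦtc ((hQt t' ht').mono hsub)) hΦc
        · exact Stmt3Aux.con_mx_mul (Stmt3Aux.con_mx_mul
            (Stmt3Aux.continuous_transpose.comp_continuousOn hPsi)
            ((hRt t' ht').mono hsub)) hPsi
      have hint := (hJm.integrableOn_compact (μ := volume) isCompact_Icc).mono_set Ico_subset_Icc_self
      refine hint.congr_fun ?_ measurableSet_Ico
      intro s hs
      obtain ⟨hA', hB', hQ', hR'⟩ := hfroz j hj s hs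
      simp only [hB', hR', hPext_eq j hj s hs]
    have hsubU : Ioo (tp x) T ⊆ ⋃ j ∈ Finset.range N, (Ico (tp j) (tp (j+1)) ∩ Ioi (tp x)) := by
      intro r hr
      obtain ⟨j, hj, hrj⟩ := cover r ⟨(tp_mem x hx).1.trans hr.1.le, hr.2⟩
      exact mem_biUnion (Finset.mem_range.mpr hj) ⟨hrj, hr.1⟩
    refine IntegrableOn.mono_set (integrableOn_finset_iUnion.mpr ?_) hsubU
    intro j hj
    rw [Finset.mem_range] at hj
    by_cases hxj : x ≤ j
    · exact (hpiece j hxj hj).mono_set inter_subset_left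
    · have hempty : Ico (tp j) (tp (j+1)) ∩ Ioi (tp x) = ∅ := by
        apply eq_empty_iff_forall_notMem.mpr
        rintro r ⟨hr1, hr2⟩
        have hle : tp (j+1) ≤ tp x := tp_le (Nat.succ_le_of_lt (not_le.mp hxj)) hx
        have : r < tp (j+1) := hr1.2
        have : tp x < r := hr2
        linarith
      rw [hempty]
      exact integrableOn_empty
  -- ================= main part =================
  intro k hk1 hkN
  have hkN' : k ≤ N := hkN.le
  have hk1N : k + 1 ≤ N := Nat.succ_le_of_lt hkN
  have hab : tp k < tp (k+1) := htplt k hkN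
  have haT : tp k ≤ T := (tp_mem k hkN').2
  have hbT : tp (k+1) ≤ T := (tp_mem (k+1) hk1N).2
  have ha0 : (0:ℝ) ≤ tp k := (tp_mem k hkN').1
  have hkIcc : tp k ∈ Icc (0:ℝ) T := tp_mem k hkN'
  have hk1Icc : tp (k-1) ∈ Icc (0:ℝ) T := tp_mem (k-1) (le_trans (Nat.sub_le k 1) hkN')
  set J1 : ℝ → Matrix (Fin n) (Fin n) ℝ := fun s =>
    (Φ k s)ᵀ * Q (tp k) s * Φ k s
      + ((RΔ s)⁻¹ * (BΔ s)ᵀ * PΔ s * Φ k s)ᵀ * R (tp k) s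
          * ((RΔ s)⁻¹ * (BΔ s)ᵀ * PΔ s * Φ k s) with hJ1
  set J2 : ℝ → Matrix (Fin n) (Fin n) ℝ := fun s =>
    (Φ k s)ᵀ * Q (tp (k-1)) s * Φ k s
      + ((RΔ s)⁻¹ * (BΔ s)ᵀ * PΔ s * Φ k s)ᵀ * R (tp (k-1)) s
          * ((RΔ s)⁻¹ * (BΔ s)ᵀ * PΔ s * Φ k s) with hJ2
  set Jn : ℝ → Matrix (Fin n) (Fin n) ℝ := fun s =>
    (Φ (k+1) s)ᵀ * Q (tp k) s * Φ (k+1) s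
      + ((RΔ s)⁻¹ * (BΔ s)ᵀ * PΔ s * Φ (k+1) s)ᵀ * R (tp k) s
          * ((RΔ s)⁻¹ * (BΔ s)ᵀ * PΔ s * Φ (k+1) s) with hJn
  have hJ1i : IntegrableOn J1 (Ioc (tp k) T) := hJIoc (tp k) hkIcc k hkN'
  have hJ2i : IntegrableOn J2 (Ioc (tp k) T) := hJIoc (tp (k-1)) hk1Icc k hkN'
  have hJni : IntegrableOn Jn (Ioc (tp (k+1)) T) := hJIoc (tp k) hkIcc (k+1) hk1N
  have hJ1ab : IntervalIntegrable J1 volume (tp k) (tp (k+1)) :=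
    (intervalIntegrable_iff_integrableOn_Ioc_of_le hab.le).mpr
      (hJ1i.mono_set (Ioc_subset_Ioc le_rfl hbT))
  have hJ1bT : IntervalIntegrable J1 volume (tp (k+1)) T :=
    (intervalIntegrable_iff_integrableOn_Ioc_of_le hbT).mpr
      (hJ1i.mono_set (Ioc_subset_Ioc hab.le le_rfl))
  have hJ1aT : IntervalIntegrable J1 volume (tp k) T :=
    (intervalIntegrable_iff_integrableOn_Ioc_of_le haT).mpr hJ1i
  have hJ2aT : IntervalIntegrable J2 volume (tp k) T :=
    (intervalIntegrable_iff_integrableOn_Ioc_of_le haT).mpr hJ2i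
  have hJnbT : IntervalIntegrable Jn volume (tp (k+1)) T :=
    (intervalIntegrable_iff_integrableOn_Ioc_of_le hbT).mpr hJni
  obtain ⟨hgk_int, hΦk_cont, hΦk_bd⟩ := hVol k hkN'
  obtain ⟨hgk1_int, hΦk1_cont, hΦk1_bd⟩ := hVol (k+1) hk1N
  have hΦk_a : Φ k (tp k) = 1 := by
    have h := hPhi k hkN' (tp k) ⟨le_rfl, haT⟩
    simpa using h
  -- derivative of the conjugated function on the open piece
  have hWder : ∀ s ∈ Ioo (tp k) (tp (k+1)),
      HasDerivAt (fun r => (Φ k r)ᵀ * Pext k r * Φ k r) (-(J1 s)) s := by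
    intro s hs
    have hsIco : s ∈ Ico (tp k) (tp (k+1)) := ⟨hs.1.le, hs.2⟩
    have hsIcc0T : s ∈ Icc (0:ℝ) T := ⟨ha0.trans hs.1.le, hs.2.le.trans hbT⟩
    obtain ⟨hA', hB', hQ', hR'⟩ := hfroz k hkN s hsIco
    have hCat : ContinuousAt Cfun s := by
      have h1 : ContinuousAt (Cext k) s :=
        (hCext_cont k hkN).continuousAt (Icc_mem_nhds hs.1 hs.2)
      refine h1.congr ?_
      filter_upwards [Ioo_mem_nhds hs.1 hs.2] with r hr
      exact (hCfun_eq k hkN r (Ioo_subset_Ico_self hr)).symm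
    have hΦd : HasDerivAt (Φ k) (Cfun s * Φ k s) s :=
      Stmt3Aux.volterra_hasDerivAt haT hgk_int hΦk_cont (hPhi k hkN')
        ⟨hs.1, lt_of_lt_of_le hs.2 hbT⟩ hCat
    have hPd : HasDerivAt (Pext k) (-(PΔ s * AΔ s + (AΔ s)ᵀ * PΔ s + QΔ s
        - PΔ s * BΔ s * (RΔ s)⁻¹ * (BΔ s)ᵀ * PΔ s)) s := by
      refine (hPode k hkN s hs).congr_of_eventuallyEq ?_
      filter_upwards [Ioo_mem_nhds hs.1 hs.2] with r hr
      exact hPext_eq k hkN r (Ioo_subset_Ico_self hr)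
    have hd1 : HasDerivAt (fun r => (Φ k r)ᵀ) (Cfun s * Φ k s)ᵀ s :=
      Stmt3Aux.hasDerivAt_mx_transpose hΦd
    have hd2 := Stmt3Aux.hasDerivAt_mx_mul hd1 hPd
    have hd3 := Stmt3Aux.hasDerivAt_mx_mul hd2 hΦd
    have hval : ((Cfun s * Φ k s)ᵀ * Pext k s
          + (Φ k s)ᵀ * (-(PΔ s * AΔ s + (AΔ s)ᵀ * PΔ s + QΔ s
              - PΔ s * BΔ s * (RΔ s)⁻¹ * (BΔ s)ᵀ * PΔ s))) * Φ k s
        + ((Φ k s)ᵀ * Pext k s) * (Cfun s * Φ k s) = -(J1 s) := by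
      rw [hPext_eq k hkN s hsIco]
      simp only [hJ1, hCfundef, hA', hB', hQ', hR']
      rw [Matrix.add_mul]
      exact Stmt3Aux.riccati_deriv_alg (PΔ s) (A (tp k) s) (Q (tp k) s) (Φ k s)
        (B (tp k) s) (R (tp k) s) (hRinvT (tp k) hkIcc s hsIcc0T)
        (hRmulinv (tp k) hkIcc s hsIcc0T)
    rw [← hval]
    exact hd3
  have hWcont : ContinuousOn (fun r => (Φ k r)ᵀ * Pext k r * Φ k r)
      (Icc (tp k) (tp (k+1))) := by
    have hΦc : ContinuousOn (Φ k) (Icc (tp k) (tp (k+1))) :=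
      hΦk_cont.mono (Icc_subset_Icc le_rfl hbT)
    exact Stmt3Aux.con_mx_mul (Stmt3Aux.con_mx_mul
      (Stmt3Aux.continuous_transpose.comp_continuousOn hΦc) (hPext_cont k hkN)) hΦc
  have hftc := intervalIntegral.integral_eq_sub_of_hasDeriv_right_of_le hab.le hWcont
    (fun s hs => (hWder s hs).hasDerivWithinAt) hJ1ab.neg
  have hftc2 : -(∫ s in (tp k)..(tp (k+1)), J1 s)
      = (Φ k (tp (k+1)))ᵀ * Pext k (tp (k+1)) * Φ k (tp (k+1))
        - (Φ k (tp k))ᵀ * Pext k (tp k) * Φ k (tp k) := by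
    rw [← intervalIntegral.integral_neg]
    exact hftc
  have hWa : (Φ k (tp k))ᵀ * Pext k (tp k) * Φ k (tp k) = PΔ (tp k) := by
    rw [hΦk_a, hPext_eq k hkN (tp k) ⟨le_rfl, hab⟩]
    simp
  have hPa : PΔ (tp k) = ((Φ k (tp (k+1)))ᵀ * Pext k (tp (k+1)) * Φ k (tp (k+1)))
      + ∫ s in (tp k)..(tp (k+1)), J1 s := by
    have h3 : ((Φ k (tp k))ᵀ * Pext k (tp k) * Φ k (tp k))
        - ((Φ k (tp (k+1)))ᵀ * Pext k (tp (k+1)) * Φ k (tp (k+1)))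
        = ∫ s in (tp k)..(tp (k+1)), J1 s := by
      rw [← neg_sub, ← hftc2, neg_neg]
    rw [← hWa]
    exact sub_eq_iff_eq_add'.mp h3
  -- cocycle property
  have hcoc : ∀ s ∈ Icc (tp (k+1)) T, Φ k s = Φ (k+1) s * Φ k (tp (k+1)) := by
    have hDeq : ∀ s ∈ Icc (tp (k+1)) T,
        (fun r => Φ k r - Φ (k+1) r * Φ k (tp (k+1))) s
          = ∫ r in (tp (k+1))..s, Cfun r * ((fun r => Φ k r - Φ (k+1) r * Φ k (tp (k+1))) r) := by
      intro s hs
      have hsa : s ∈ Icc (tp k) T := ⟨hab.le.trans hs.1, hs.2⟩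
      have h1 : Φ k s = 1 + ∫ r in (tp k)..s, Cfun r * Φ k r := hPhi k hkN' s hsa
      have h2 : Φ k (tp (k+1)) = 1 + ∫ r in (tp k)..(tp (k+1)), Cfun r * Φ k r :=
        hPhi k hkN' (tp (k+1)) ⟨hab.le, hbT⟩
      have hint1 : IntervalIntegrable (fun r => Cfun r * Φ k r) volume (tp k) (tp (k+1)) :=
        (intervalIntegrable_iff_integrableOn_Ioc_of_le hab.le).mpr
          (hgk_int.mono_set (Ioc_subset_Ioc le_rfl hbT))
      have hint2 : IntervalIntegrable (fun r => Cfun r * Φ k r) volume (tp (k+1)) s :=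
        (intervalIntegrable_iff_integrableOn_Ioc_of_le hs.1).mpr
          (hgk_int.mono_set (Ioc_subset_Ioc hab.le hs.2))
      have h3 : Φ k s = Φ k (tp (k+1)) + ∫ r in (tp (k+1))..s, Cfun r * Φ k r := by
        rw [h1, h2, ← intervalIntegral.integral_add_adjacent_intervals hint1 hint2, add_assoc]
      have h4 : Φ (k+1) s = 1 + ∫ r in (tp (k+1))..s, Cfun r * Φ (k+1) r :=
        hPhi (k+1) hk1N s hs
      have hint3 : IntervalIntegrable (fun r => Cfun r * Φ (k+1) r) volume (tp (k+1)) s :=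
        (intervalIntegrable_iff_integrableOn_Ioc_of_le hs.1).mpr
          (hgk1_int.mono_set (Ioc_subset_Ioc le_rfl hs.2))
      have h5 : Φ (k+1) s * Φ k (tp (k+1)) = Φ k (tp (k+1))
          + ∫ r in (tp (k+1))..s, (Cfun r * Φ (k+1) r) * Φ k (tp (k+1)) := by
        rw [h4, Matrix.add_mul, Matrix.one_mul]
        congr 1
        have h6 := (Stmt3Aux.rmulCLM (a := n) (Φ k (tp (k+1)))).intervalIntegral_comp_comm hint3
        simpa using h6.symm
      have hint3M : IntervalIntegrable (fun r => (Cfun r * Φ (k+1) r) * Φ k (tp (k+1)))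
          volume (tp (k+1)) s :=
        ⟨(Stmt3Aux.rmulCLM (a := n) (Φ k (tp (k+1)))).integrable_comp hint3.1,
          (Stmt3Aux.rmulCLM (a := n) (Φ k (tp (k+1)))).integrable_comp hint3.2⟩
      calc Φ k s - Φ (k+1) s * Φ k (tp (k+1))
          = (Φ k (tp (k+1)) + ∫ r in (tp (k+1))..s, Cfun r * Φ k r)
            - (Φ k (tp (k+1)) + ∫ r in (tp (k+1))..s, (Cfun r * Φ (k+1) r) * Φ k (tp (k+1))) := by
            rw [← h3, ← h5]
        _ = (∫ r in (tp (k+1))..s, Cfun r * Φ k r)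
            - ∫ r in (tp (k+1))..s, (Cfun r * Φ (k+1) r) * Φ k (tp (k+1)) := by abel
        _ = ∫ r in (tp (k+1))..s,
              (Cfun r * Φ k r - (Cfun r * Φ (k+1) r) * Φ k (tp (k+1))) :=
            (intervalIntegral.integral_sub hint2 hint3M).symm
        _ = ∫ r in (tp (k+1))..s, Cfun r * (Φ k r - Φ (k+1) r * Φ k (tp (k+1))) := by
            congr 1
            funext r
            rw [Matrix.mul_sub, Matrix.mul_assoc]
    have hDc : ContinuousOn (fun r => Φ k r - Φ (k+1) r * Φ k (tp (k+1)))
        (Icc (tp (k+1)) T) :=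
      (hΦk_cont.mono (Icc_subset_Icc hab.le le_rfl)).sub
        (Stmt3Aux.con_mx_mul hΦk1_cont continuousOn_const)
    have hsubb : Ico (tp (k+1)) T ⊆ Ico (0:ℝ) T :=
      fun r hr => ⟨(tp_mem (k+1) hk1N).1.trans hr.1, hr.2⟩
    have huniq := Stmt3Aux.volterra_unique hbT hK00
      (hCm_glob.mono_measure (Measure.restrict_mono hsubb le_rfl))
      (fun r hr => hCbd_glob r (hsubb hr))
      (fun t ht => hCrc_glob t (hsubb ht)) hDc hDeq
    intro s hs
    exact sub_eq_zero.mp (huniq s hs)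
  -- conjugation of the node formula
  have hconj : (Φ k (tp (k+1)))ᵀ * ((Φ (k+1) T)ᵀ * G (tp k) * Φ (k+1) T
        + ∫ s in (tp (k+1))..T, Jn s) * Φ k (tp (k+1))
      = (Φ k T)ᵀ * G (tp k) * Φ k T + ∫ s in (tp (k+1))..T, J1 s := by
    rw [Matrix.mul_add, Matrix.add_mul]
    congr 1
    · have hT' : Φ k T = Φ (k+1) T * Φ k (tp (k+1)) := hcoc T ⟨hbT, le_rfl⟩
      rw [hT']
      simp only [Matrix.transpose_mul, Matrix.mul_assoc]
    · have hstep1 : (Φ k (tp (k+1)))ᵀ * (∫ s in (tp (k+1))..T, Jn s)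
          = ∫ s in (tp (k+1))..T, (Φ k (tp (k+1)))ᵀ * Jn s := by
        have h7 := (Stmt3Aux.lmulCLM (c := n) ((Φ k (tp (k+1)))ᵀ)).intervalIntegral_comp_comm hJnbT
        simpa using h7.symm
      rw [hstep1]
      have hint4 : IntervalIntegrable (fun s => (Φ k (tp (k+1)))ᵀ * Jn s)
          volume (tp (k+1)) T :=
        ⟨(Stmt3Aux.lmulCLM (c := n) ((Φ k (tp (k+1)))ᵀ)).integrable_comp hJnbT.1,
          (Stmt3Aux.lmulCLM (c := n) ((Φ k (tp (k+1)))ᵀ)).integrable_comp hJnbT.2⟩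
      have hstep2 : (∫ s in (tp (k+1))..T, (Φ k (tp (k+1)))ᵀ * Jn s) * Φ k (tp (k+1))
          = ∫ s in (tp (k+1))..T, ((Φ k (tp (k+1)))ᵀ * Jn s) * Φ k (tp (k+1)) := by
        have h8 := (Stmt3Aux.rmulCLM (a := n) (Φ k (tp (k+1)))).intervalIntegral_comp_comm hint4
        simpa using h8.symm
      rw [hstep2]
      refine intervalIntegral.integral_congr ?_
      intro s hs
      rw [uIcc_of_le hbT] at hs
      have hcs : Φ k s = Φ (k+1) s * Φ k (tp (k+1)) := hcoc s hs
      simp only [hJn, hJ1]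
      exact Stmt3Aux.conj_integrand (Φ k (tp (k+1))) (Φ (k+1) s) (Q (tp k) s) (Φ k s)
        ((RΔ s)⁻¹ * (BΔ s)ᵀ * PΔ s) (R (tp k) s) hcs
  -- representation of PΔ (tp k)
  have hPp : PΔ (tp k) = (Φ k T)ᵀ * G (tp k) * Φ k T + ∫ s in (tp k)..T, J1 s := by
    rw [hPa]
    have hPextb : Pext k (tp (k+1)) = (Φ (k+1) T)ᵀ * G (tp k) * Φ (k+1) T
        + ∫ s in (tp (k+1))..T, Jn s := Function.update_self _ _ _
    rw [hPextb, hconj, add_assoc]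
    congr 1
    rw [add_comm]
    exact intervalIntegral.integral_add_adjacent_intervals hJ1ab hJ1bT
  -- assemble the answer
  refine ⟨PΔ (tp k), _, ?_, hPlim k hk1 hkN', ?_, ?_⟩
  · -- right limit
    have h1 : ContinuousWithinAt PΔ (Ico (tp k) (tp (k+1))) (tp k) :=
      hPcont k hkN (tp k) ⟨le_rfl, hab⟩
    have h2 : Filter.Tendsto PΔ (nhdsWithin (tp k) (Ioo (tp k) (tp (k+1)))) (nhds (PΔ (tp k))) :=
      h1.mono_left (nhdsWithin_mono _ Ioo_subset_Ico_self)
    have hfil : nhdsWithin (tp k) (Ioi (tp k)) = nhdsWithin (tp k) (Ioo (tp k) (tp (k+1))) := by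
      rw [nhdsWithin_restrict' _ (Iio_mem_nhds hab), Ioi_inter_Iio]
    rw [hfil]
    exact h2
  · -- the jump formula
    rw [hPp]
    have hGdiff : (Φ k T)ᵀ * G (tp k) * Φ k T - (Φ k T)ᵀ * G (tp (k-1)) * Φ k T
        = (Φ k T)ᵀ * (G (tp k) - G (tp (k-1))) * Φ k T := by
      simp only [Matrix.mul_sub, Matrix.sub_mul]
    have hIdiff : (∫ s in (tp k)..T, J1 s) - (∫ s in (tp k)..T, J2 s)
        = ∫ s in (tp k)..T, (J1 s - J2 s) := (intervalIntegral.integral_sub hJ1aT hJ2aT).symm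
    have hptwise : (fun s => J1 s - J2 s) = fun s =>
        ((Φ k s)ᵀ * (Q (tp k) s - Q (tp (k - 1)) s) * Φ k s
          + ((RΔ s)⁻¹ * (BΔ s)ᵀ * PΔ s * Φ k s)ᵀ
              * (R (tp k) s - R (tp (k - 1)) s)
              * ((RΔ s)⁻¹ * (BΔ s)ᵀ * PΔ s * Φ k s)) := by
      funext s
      simp only [hJ1, hJ2, Matrix.mul_sub, Matrix.sub_mul]
      abel
    calc ((Φ k T)ᵀ * G (tp k) * Φ k T + ∫ s in (tp k)..T, J1 s)
        - ((Φ k T)ᵀ * G (tp (k-1)) * Φ k T + ∫ s in (tp k)..T, J2 s)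
        = ((Φ k T)ᵀ * G (tp k) * Φ k T - (Φ k T)ᵀ * G (tp (k-1)) * Φ k T)
          + ((∫ s in (tp k)..T, J1 s) - ∫ s in (tp k)..T, J2 s) := by abel
      _ = (Φ k T)ᵀ * (G (tp k) - G (tp (k-1))) * Φ k T
          + ∫ s in (tp k)..T, (J1 s - J2 s) := by rw [hGdiff, hIdiff]
      _ = _ := by rw [hptwise]
  · -- positive semidefiniteness
    rw [hPp]
    have heq : ((Φ k T)ᵀ * G (tp k) * Φ k T + ∫ s in (tp k)..T, J1 s)
        - ((Φ k T)ᵀ * G (tp (k-1)) * Φ k T + ∫ s in (tp k)..T, J2 s)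
        = (Φ k T)ᵀ * (G (tp k) - G (tp (k-1))) * Φ k T
          + ∫ s in (tp k)..T, (J1 s - J2 s) := by
      have hGdiff : (Φ k T)ᵀ * G (tp k) * Φ k T - (Φ k T)ᵀ * G (tp (k-1)) * Φ k T
          = (Φ k T)ᵀ * (G (tp k) - G (tp (k-1))) * Φ k T := by
        simp only [Matrix.mul_sub, Matrix.sub_mul]
      have hIdiff : (∫ s in (tp k)..T, J1 s) - (∫ s in (tp k)..T, J2 s)
          = ∫ s in (tp k)..T, (J1 s - J2 s) := (intervalIntegral.integral_sub hJ1aT hJ2aT).symm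
      calc ((Φ k T)ᵀ * G (tp k) * Φ k T + ∫ s in (tp k)..T, J1 s)
          - ((Φ k T)ᵀ * G (tp (k-1)) * Φ k T + ∫ s in (tp k)..T, J2 s)
          = ((Φ k T)ᵀ * G (tp k) * Φ k T - (Φ k T)ᵀ * G (tp (k-1)) * Φ k T)
            + ((∫ s in (tp k)..T, J1 s) - ∫ s in (tp k)..T, J2 s) := by abel
        _ = _ := by rw [hGdiff, hIdiff]
    rw [heq]
    have htpk1k : tp (k-1) ≤ tp k := tp_le (Nat.sub_le k 1) hkN'
    refine Matrix.PosSemidef.add ?_ ?_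
    · have hGpsd := hGm (tp (k-1)) (tp k) hk1Icc.1 htpk1k haT
      have h9 := hGpsd.conjTranspose_mul_mul_same (Φ k T)
      rwa [Matrix.conjTranspose_eq_transpose_of_trivial] at h9
    · refine Stmt3Aux.psd_intervalIntegral haT ?_
      intro s hs
      have hsIcc : s ∈ Icc (0:ℝ) T := ⟨ha0.trans hs.1.le, hs.2.le⟩
      have hQpsd := hQm (tp (k-1)) (tp k) s hk1Icc.1 htpk1k hs.1.le hs.2.le
      have hRpsd := hRm (tp (k-1)) (tp k) s hk1Icc.1 htpk1k hs.1.le hs.2.le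
      have h10 := hQpsd.conjTranspose_mul_mul_same (Φ k s)
      rw [Matrix.conjTranspose_eq_transpose_of_trivial] at h10
      have h11 := hRpsd.conjTranspose_mul_mul_same ((RΔ s)⁻¹ * (BΔ s)ᵀ * PΔ s * Φ k s)
      rw [Matrix.conjTranspose_eq_transpose_of_trivial] at h11
      have h12 := h10.add h11
      have hsplit : J1 s - J2 s = (Φ k s)ᵀ * (Q (tp k) s - Q (tp (k - 1)) s) * Φ k s
          + ((RΔ s)⁻¹ * (BΔ s)ᵀ * PΔ s * Φ k s)ᵀ
              * (R (tp k) s - R (tp (k - 1)) s)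
              * ((RΔ s)⁻¹ * (BΔ s)ᵀ * PΔ s * Φ k s) := by
        simp only [hJ1, hJ2, Matrix.mul_sub, Matrix.sub_mul]
        abel
      rw [hsplit]
      exact h12

end MxTopSec2

/-- under (H1)–(H2), at every interior node `t_k` (`1 ≤ k ≤ N−1`) the
jump `ΔP^Δ(t_k) = P^Δ(t_k+0) − P^Δ(t_k−0)` equals
`Φ^Δ(T;t_k)ᵀ[G(t_k)−G(t_{k−1})]Φ^Δ(T;t_k) + ∫_{t_k}^T [Φ^Δᵀ(Q(t_k,·)−Q(t_{k−1},·))Φ^Δ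
 + Ψ^Δᵀ(R(t_k,·)−R(t_{k−1},·))Ψ^Δ] ds`, a positive semidefinite matrix. -/
theorem stmt_3 (n m : ℕ) (T L δ : ℝ) (hT : 0 < T) (hL : 0 < L) (hδ : 0 < δ)
    (A : ℝ → ℝ → Matrix (Fin n) (Fin n) ℝ) (B : ℝ → ℝ → Matrix (Fin n) (Fin m) ℝ)
    (Q : ℝ → ℝ → Matrix (Fin n) (Fin n) ℝ) (R : ℝ → ℝ → Matrix (Fin m) (Fin m) ℝ)
    (G : ℝ → Matrix (Fin n) (Fin n) ℝ)
    -- (H1): continuity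
    (hAc : ContinuousOn (fun p : ℝ × ℝ => A p.1 p.2) (Icc 0 T ×ˢ Icc 0 T))
    (hBc : ContinuousOn (fun p : ℝ × ℝ => B p.1 p.2) (Icc 0 T ×ˢ Icc 0 T))
    (hQc : ContinuousOn (fun p : ℝ × ℝ => Q p.1 p.2) (Icc 0 T ×ˢ Icc 0 T))
    (hRc : ContinuousOn (fun p : ℝ × ℝ => R p.1 p.2) (Icc 0 T ×ˢ Icc 0 T))
    (hGc : ContinuousOn G (Icc 0 T))
    -- (H1): Lipschitz continuity in the first variable
    (hLip : ∀ t ∈ Icc (0:ℝ) T, ∀ r ∈ Icc (0:ℝ) T, ∀ s ∈ Icc (0:ℝ) T,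
      ‖A t s - A r s‖ + ‖B t s - B r s‖ + ‖Q t s - Q r s‖ + ‖R t s - R r s‖
          + ‖G t - G r‖ ≤ L * |t - r|)
    -- (H1): positivity
    (hQ : ∀ t ∈ Icc (0:ℝ) T, ∀ s ∈ Icc (0:ℝ) T, (Q t s).PosSemidef)
    (hG : ∀ t ∈ Icc (0:ℝ) T, (G t).PosSemidef)
    (hR : ∀ t ∈ Icc (0:ℝ) T, ∀ s ∈ Icc (0:ℝ) T,
      (R t s - δ • (1 : Matrix (Fin m) (Fin m) ℝ)).PosSemidef)
    -- (H2): monotonicity in the first variable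
    (hGm : ∀ t r : ℝ, 0 ≤ t → t ≤ r → r ≤ T → (G r - G t).PosSemidef)
    (hQm : ∀ t r s : ℝ, 0 ≤ t → t ≤ r → r ≤ s → s ≤ T → (Q r s - Q t s).PosSemidef)
    (hRm : ∀ t r s : ℝ, 0 ≤ t → t ≤ r → r ≤ s → s ≤ T → (R r s - R t s).PosSemidef)
    (N : ℕ) (tp : ℕ → ℝ) (hpart : IsPartition T N tp)
    (AΔ : ℝ → Matrix (Fin n) (Fin n) ℝ) (BΔ : ℝ → Matrix (Fin n) (Fin m) ℝ)
    (QΔ : ℝ → Matrix (Fin n) (Fin n) ℝ) (RΔ : ℝ → Matrix (Fin m) (Fin m) ℝ)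
    (hfroz : IsFrozen n m N tp A B Q R AΔ BΔ QΔ RΔ)
    (PΔ : ℝ → Matrix (Fin n) (Fin n) ℝ) (Φ : ℕ → ℝ → Matrix (Fin n) (Fin n) ℝ)
    (hPΔ : IsPiecewiseRiccati n m N T tp Q R G AΔ BΔ QΔ RΔ PΔ Φ) :
    ∀ k, 1 ≤ k → k < N →
      ∃ Pp Pm : Matrix (Fin n) (Fin n) ℝ,
        Filter.Tendsto PΔ (nhdsWithin (tp k) (Ioi (tp k))) (nhds Pp) ∧
        Filter.Tendsto PΔ (nhdsWithin (tp k) (Iio (tp k))) (nhds Pm) ∧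
        Pp - Pm
          = (Φ k T)ᵀ * (G (tp k) - G (tp (k - 1))) * Φ k T
            + ∫ s in (tp k)..T,
                ((Φ k s)ᵀ * (Q (tp k) s - Q (tp (k - 1)) s) * Φ k s
                  + ((RΔ s)⁻¹ * (BΔ s)ᵀ * PΔ s * Φ k s)ᵀ
                      * (R (tp k) s - R (tp (k - 1)) s)
                      * ((RΔ s)⁻¹ * (BΔ s)ᵀ * PΔ s * Φ k s)) ∧
        (Pp - Pm).PosSemidef := by
  exact stmt_3_mx n m T L δ hT hL hδ A B Q R G hAc hBc hQc hRc hGc hLip hQ hG hR hGm hQm hRm N tp hpart AΔ BΔ QΔ RΔ hfroz PΔ Φ hPΔ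
end

section
/- Let A:[0,T]→ℝ^{n×n}, B:[0,T]→ℝ^{n×m}, Q:[0,T]→𝒮ⁿ, R:[0,T]→𝒮ᵐ be continuous with Q(s) ≥ 0, R(s) ≥ δI (δ>0), and G ∈ 𝒮ⁿ with G ≥ 0. Let P be the solution of the Riccati equation Ṗ+PA+AᵀP+Q−PBR^{−1}BᵀP=0, P(T)=G, and let P₀ be the solution of the Lyapunov equation Ṗ₀+P₀A+AᵀP₀+Q=0, P₀(T)=G. Then 0 ≤ P(t) ≤ P₀(t) for all t ∈ [0,T]. -/
set_option maxHeartbeats 1000000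

open Set Matrix Filter Topology

attribute [local instance] Matrix.normedAddCommGroup Matrix.normedSpace

private lemma quad_cont (n : ℕ) :
    Continuous fun p : Matrix (Fin n) (Fin n) ℝ × (Fin n → ℝ) => p.2 ⬝ᵥ (p.1 *ᵥ p.2) := by
  simp only [dotProduct, mulVec]
  fun_prop

private lemma quad_bound {n : ℕ} (M : Matrix (Fin n) (Fin n) ℝ) {x : Fin n → ℝ}
    (hx : x ⬝ᵥ x = 1) : |x ⬝ᵥ (M *ᵥ x)| ≤ n * ‖M‖ := by
  have hM : 0 ≤ ‖M‖ := norm_nonneg _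
  have h1 : |x ⬝ᵥ (M *ᵥ x)| ≤ ∑ i, ∑ j, |x i| * (‖M‖ * |x j|) := by
    rw [dotProduct]
    refine (Finset.abs_sum_le_sum_abs _ _).trans ?_
    refine Finset.sum_le_sum fun i _ => ?_
    rw [mulVec, dotProduct, Finset.mul_sum]
    refine (Finset.abs_sum_le_sum_abs _ _).trans ?_
    refine Finset.sum_le_sum fun j _ => ?_
    rw [abs_mul, abs_mul]
    have hMe := Matrix.norm_entry_le_entrywise_sup_norm M (i := i) (j := j)
    exact mul_le_mul_of_nonneg_left
      (mul_le_mul_of_nonneg_right (by simpa using hMe) (abs_nonneg _)) (abs_nonneg _)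
  have h2 : ∑ i, ∑ j, |x i| * (‖M‖ * |x j|) = ‖M‖ * ((∑ i, |x i|) * (∑ j, |x j|)) := by
    rw [Finset.sum_mul_sum, Finset.mul_sum]
    refine Finset.sum_congr rfl fun i _ => ?_
    rw [Finset.mul_sum]
    exact Finset.sum_congr rfl fun j _ => by ring
  have h3 : (∑ i, |x i|) * (∑ j, |x j|) ≤ (n : ℝ) := by
    have := Finset.sum_mul_sq_le_sq_mul_sq Finset.univ (fun i => |x i|) (fun _ => 1)
    simp only [mul_one, one_pow, Finset.sum_const, Finset.card_univ, Fintype.card_fin,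
      nsmul_eq_mul] at this
    have hxx : ∑ i, |x i| ^ 2 = 1 := by
      rw [← hx, dotProduct]
      exact Finset.sum_congr rfl fun i _ => by rw [sq_abs]; ring
    rw [hxx, one_mul] at this
    calc (∑ i, |x i|) * (∑ j, |x j|) = (∑ i, |x i|) ^ 2 := (sq _).symm
      _ ≤ (n : ℝ) := this
  have h4 : |x ⬝ᵥ (M *ᵥ x)| ≤ ‖M‖ * ((∑ i, |x i|) * (∑ j, |x j|)) := h2 ▸ h1
  calc |x ⬝ᵥ (M *ᵥ x)| ≤ ‖M‖ * ((∑ i, |x i|) * (∑ j, |x j|)) := h4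
    _ ≤ ‖M‖ * n := mul_le_mul_of_nonneg_left h3 hM
    _ = n * ‖M‖ := mul_comm _ _

private lemma unit_scale {n : ℕ} {y : Fin n → ℝ} (hy : y ≠ 0) :
    ∃ u : Fin n → ℝ, u ⬝ᵥ u = 1 ∧ ∃ c : ℝ, 0 < c ∧
      ∀ M : Matrix (Fin n) (Fin n) ℝ, u ⬝ᵥ (M *ᵥ u) = c * (y ⬝ᵥ (M *ᵥ y)) := by
  have ha0 : 0 ≤ y ⬝ᵥ y := by
    rw [dotProduct]; exact Finset.sum_nonneg fun i _ => mul_self_nonneg _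
  have ha : 0 < y ⬝ᵥ y := lt_of_le_of_ne ha0 (fun h => hy (dotProduct_self_eq_zero.mp h.symm))
  set a := y ⬝ᵥ y with hadef
  refine ⟨(Real.sqrt a)⁻¹ • y, ?_, a⁻¹, inv_pos.mpr ha, fun M => ?_⟩
  · rw [smul_dotProduct, dotProduct_smul, smul_eq_mul, smul_eq_mul, ← mul_assoc, ← mul_inv,
      Real.mul_self_sqrt ha.le]
    exact inv_mul_cancel₀ ha.ne'
  · rw [Matrix.mulVec_smul, smul_dotProduct, dotProduct_smul, smul_eq_mul, smul_eq_mul,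
      ← mul_assoc, ← mul_inv, Real.mul_self_sqrt ha.le]

private lemma quadCLM_exists {n : ℕ} (x : Fin n → ℝ) :
    ∃ L : Matrix (Fin n) (Fin n) ℝ →L[ℝ] ℝ, ∀ M, L M = x ⬝ᵥ (M *ᵥ x) := by
  refine ⟨LinearMap.toContinuousLinearMap
    { toFun := fun M => x ⬝ᵥ (M *ᵥ x)
      map_add' := fun M N => by rw [Matrix.add_mulVec, dotProduct_add]
      map_smul' := fun c M => by
        rw [Matrix.smul_mulVec, dotProduct_smul, smul_eq_mul, RingHom.id_apply,
          smul_eq_mul] }, fun M => rfl⟩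

private lemma sphere_compact (n : ℕ) : IsCompact {x : Fin n → ℝ | x ⬝ᵥ x = 1} := by
  apply Metric.isCompact_of_isClosed_isBounded
  · exact isClosed_eq (by simp only [dotProduct]; fun_prop) continuous_const
  · rw [Metric.isBounded_iff_subset_closedBall 0]
    refine ⟨1, fun x hx => ?_⟩
    simp only [Metric.mem_closedBall, dist_zero_right]
    rw [pi_norm_le_iff_of_nonneg zero_le_one]
    intro i
    rw [Real.norm_eq_abs, abs_le_one_iff_mul_self_le_one]
    have := hx
    simp only [mem_setOf_eq, dotProduct] at this
    calc x i * x i ≤ ∑ j, x j * x j :=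
          Finset.single_le_sum (fun j _ => mul_self_nonneg (x j)) (Finset.mem_univ i)
      _ = 1 := this

private lemma riccati_mono {n : ℕ} {T : ℝ} (hT : 0 < T)
    (A N S : ℝ → Matrix (Fin n) (Fin n) ℝ)
    (hA : ContinuousOn A (Icc 0 T))
    (hN : ∀ s ∈ Icc (0:ℝ) T, (N s).PosSemidef)
    (hS : ∀ s ∈ Icc (0:ℝ) T, HasDerivWithinAt S
        (-(S s * A s + (A s)ᵀ * S s + N s)) (Icc 0 T) s)
    (hSsymm : ∀ s ∈ Icc (0:ℝ) T, (S s).IsSymm)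
    (hST : (S T).PosSemidef) :
    ∀ t ∈ Icc (0:ℝ) T, (S t).PosSemidef := by
  classical
  have hScont : ContinuousOn S (Icc 0 T) := fun s hs => (hS s hs).continuousWithinAt
  obtain ⟨C0, hC0⟩ := isCompact_Icc.exists_bound_of_continuousOn hA
  set CA : ℝ := max C0 0 with hCAdef
  have hCA0 : (0:ℝ) ≤ CA := le_max_right _ _
  have hAb : ∀ s ∈ Icc (0:ℝ) T, ‖A s‖ ≤ CA := fun s hs => (hC0 s hs).trans (le_max_left _ _)
  set K : ℝ := 2 * n * CA + 1 with hKdef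
  have main : ∀ ε : ℝ, 0 < ε → ∀ t ∈ Icc (0:ℝ) T, ∀ x : Fin n → ℝ, x ⬝ᵥ x = 1 →
      0 < x ⬝ᵥ ((S t + (ε * Real.exp (K * (T - t))) • 1) *ᵥ x) := by
    intro ε hε
    by_contra hcon
    push_neg at hcon
    obtain ⟨t₁, ht₁, x₁, hx₁, hq₁⟩ := hcon
    set Sε : ℝ → Matrix (Fin n) (Fin n) ℝ :=
      fun t => S t + (ε * Real.exp (K * (T - t))) • 1 with hSεdef
    have hqeq : ∀ (t : ℝ) (x : Fin n → ℝ), x ⬝ᵥ x = 1 →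
        x ⬝ᵥ (Sε t *ᵥ x) = x ⬝ᵥ (S t *ᵥ x) + ε * Real.exp (K * (T - t)) := by
      intro t x hx
      rw [hSεdef]
      simp only [Matrix.add_mulVec, Matrix.smul_mulVec, Matrix.one_mulVec,
        dotProduct_add, dotProduct_smul, smul_eq_mul, hx, mul_one]
    have hSεcont : ContinuousOn Sε (Icc 0 T) := by
      apply hScont.add
      have : Continuous fun t : ℝ =>
          (ε * Real.exp (K * (T - t))) • (1 : Matrix (Fin n) (Fin n) ℝ) := by fun_prop
      exact this.continuousOn
    set F : Set ℝ := {t | t ∈ Icc (0:ℝ) T ∧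
      ∃ x : Fin n → ℝ, x ⬝ᵥ x = 1 ∧ x ⬝ᵥ (Sε t *ᵥ x) ≤ 0} with hFdef
    have hFt₁ : t₁ ∈ F := ⟨ht₁, x₁, hx₁, hq₁⟩
    have hFne : F.Nonempty := ⟨t₁, hFt₁⟩
    have hFbdd : BddAbove F := ⟨T, fun t ht => ht.1.2⟩
    set tc : ℝ := sSup F with htcdef
    have htc_le : tc ≤ T := csSup_le hFne fun t ht => ht.1.2
    have htc_ge : (0:ℝ) ≤ tc := le_trans ht₁.1 (le_csSup hFbdd hFt₁)
    have htcIcc : tc ∈ Icc (0:ℝ) T := ⟨htc_ge, htc_le⟩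
    -- tc ∈ F via sequential compactness
    have htcF : tc ∈ F := by
      have hcl : tc ∈ closure F := csSup_mem_closure hFne hFbdd
      obtain ⟨u, hu, hut⟩ := mem_closure_iff_seq_limit.1 hcl
      choose xs hxs hqs using fun k => (hu k).2
      obtain ⟨x, hx, φ, hφ, hxconv⟩ := (sphere_compact n).tendsto_subseq hxs
      refine ⟨htcIcc, x, hx, ?_⟩
      have h1 : Tendsto (fun k => Sε (u (φ k))) atTop (𝓝 (Sε tc)) := by
        refine (hSεcont tc htcIcc).tendsto.comp ?_
        refine tendsto_nhdsWithin_of_tendsto_nhds_of_eventually_within _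
          (hut.comp hφ.tendsto_atTop) ?_
        exact Eventually.of_forall fun k => (hu (φ k)).1
      have h2 : Tendsto (fun k => (xs (φ k)) ⬝ᵥ (Sε (u (φ k)) *ᵥ xs (φ k))) atTop
          (𝓝 (x ⬝ᵥ (Sε tc *ᵥ x))) :=
        ((quad_cont n).tendsto (Sε tc, x)).comp (h1.prodMk_nhds hxconv)
      exact le_of_tendsto h2 (Eventually.of_forall fun k => hqs (φ k))
    obtain ⟨x, hx, hqx⟩ := htcF.2
    -- T ∉ F
    have hTnotF : T ∉ F := by
      rintro ⟨-, y, hy, hqy⟩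
      have h0 : 0 ≤ y ⬝ᵥ (S T *ᵥ y) := by simpa using hST.dotProduct_mulVec_nonneg y
      have := hqeq T y hy
      rw [this] at hqy
      have : 0 < ε * Real.exp (K * (T - T)) := by positivity
      linarith
    have htclt : tc < T := lt_of_le_of_ne htc_le (fun h => hTnotF (h ▸ htcF))
    -- positivity off F
    have hpos_notF : ∀ t ∈ Icc (0:ℝ) T, t ∉ F → ∀ y : Fin n → ℝ,
        0 ≤ y ⬝ᵥ (Sε t *ᵥ y) := by
      intro t ht htF y
      rcases eq_or_ne y 0 with rfl | hy
      · simp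
      by_contra hneg
      push_neg at hneg
      obtain ⟨u, hu1, c, hc, hquad⟩ := unit_scale hy
      refine htF ⟨ht, u, hu1, ?_⟩
      rw [hquad (Sε t)]
      exact mul_nonpos_of_nonneg_of_nonpos hc.le hneg.le
    have hIocnotF : ∀ t ∈ Ioc tc T, t ∉ F := by
      intro t ht htF
      exact absurd (le_csSup hFbdd htF) (not_le.mpr ht.1)
    have hIocIcc : Ioc tc T ⊆ Icc (0:ℝ) T := fun t ht => ⟨le_trans htc_ge ht.1.le, ht.2⟩
    -- Sε tc is PSD
    have hSεsymm : (Sε tc).IsHermitian := by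
      rw [Matrix.IsHermitian, Matrix.conjTranspose_eq_transpose_of_trivial, hSεdef]
      simp only [Matrix.transpose_add, Matrix.transpose_smul, Matrix.transpose_one]
      rw [(hSsymm tc htcIcc).eq]
    have hnebot : (𝓝[Ioc tc T] tc).NeBot := by
      rw [nhdsWithin_Ioc_eq_nhdsGT htclt]
      infer_instance
    have hSεpsd : (Sε tc).PosSemidef := by
      refine Matrix.PosSemidef.of_dotProduct_mulVec_nonneg hSεsymm (fun y => ?_)
      have hcw : Tendsto (fun t => y ⬝ᵥ (Sε t *ᵥ y)) (𝓝[Ioc tc T] tc)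
          (𝓝 (y ⬝ᵥ (Sε tc *ᵥ y))) := by
        have hc1 : ContinuousWithinAt (fun t => y ⬝ᵥ (Sε t *ᵥ y)) (Icc 0 T) tc := by
          have : ContinuousWithinAt Sε (Icc 0 T) tc := hSεcont tc htcIcc
          exact ContinuousAt.comp_continuousWithinAt (f := fun t => (Sε t, y))
            (g := fun p : Matrix (Fin n) (Fin n) ℝ × (Fin n → ℝ) => p.2 ⬝ᵥ (p.1 *ᵥ p.2))
            ((quad_cont n).continuousAt) (this.prodMk continuousWithinAt_const)
        exact hc1.tendsto.mono_left (nhdsWithin_mono _ hIocIcc)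
      have hev : ∀ᶠ t in 𝓝[Ioc tc T] tc, 0 ≤ y ⬝ᵥ (Sε t *ᵥ y) := by
        filter_upwards [self_mem_nhdsWithin] with t ht
        exact hpos_notF t (hIocIcc ht) (hIocnotF t ht) y
      simpa using ge_of_tendsto hcw hev
    -- kernel vector
    have hq0 : x ⬝ᵥ (Sε tc *ᵥ x) = 0 :=
      le_antisymm hqx (by simpa using hSεpsd.dotProduct_mulVec_nonneg x)
    have hker : Sε tc *ᵥ x = 0 := by
      have := (hSεpsd.dotProduct_mulVec_zero_iff x).mp (by simpa using hq0)
      exact this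
    set c : ℝ := ε * Real.exp (K * (T - tc)) with hcdef
    have hcpos : 0 < c := by positivity
    have hSx : S tc *ᵥ x = (-c) • x := by
      have h1 : S tc *ᵥ x + c • x = 0 := by
        have := hker
        rw [hSεdef] at this
        simpa [Matrix.add_mulVec, Matrix.smul_mulVec, Matrix.one_mulVec] using this
      have := eq_neg_of_add_eq_zero_left h1
      rw [this, neg_smul]
    -- the scalar function
    set φf : ℝ → ℝ := fun t => x ⬝ᵥ (S t *ᵥ x) + ε * Real.exp (K * (T - t)) with hφfdef
    obtain ⟨L, hL⟩ := quadCLM_exists x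
    set D : ℝ := L (-(S tc * A tc + (A tc)ᵀ * S tc + N tc)) +
      ε * (Real.exp (K * (T - tc)) * (K * -1)) with hDdef
    have hDeriv : HasDerivWithinAt φf D (Icc 0 T) tc := by
      have h1 : HasDerivWithinAt (fun t => L (S t))
          (L (-(S tc * A tc + (A tc)ᵀ * S tc + N tc))) (Icc 0 T) tc :=
        L.hasFDerivAt.comp_hasDerivWithinAt tc (hS tc htcIcc)
      have h2 : HasDerivAt (fun t => ε * Real.exp (K * (T - t)))
          (ε * (Real.exp (K * (T - tc)) * (K * -1))) tc := by
        have hg : HasDerivAt (fun t : ℝ => K * (T - t)) (K * -1) tc :=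
          ((hasDerivAt_id tc).const_sub T).const_mul K
        exact hg.exp.const_mul ε
      have h3 := h1.add h2.hasDerivWithinAt
      refine h3.congr (fun t _ => ?_) ?_
      · rw [hφfdef]; simp only [hL, Pi.add_apply]
      · rw [hφfdef]; simp only [hL, Pi.add_apply]
    -- D is nonnegative via slopes
    have hφtc : φf tc = 0 := by
      have := hqeq tc x hx
      rw [hφfdef]
      simp only [← this, hq0]
    have hDnn : 0 ≤ D := by
      have hsub : Icc tc T ⊆ Icc 0 T := Icc_subset_Icc htc_ge le_rfl
      have h' := (hDeriv.mono hsub)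
      rw [hasDerivWithinAt_iff_tendsto_slope] at h'
      have hset : Icc tc T \ {tc} = Ioc tc T := by
        ext t
        simp only [mem_diff, mem_Icc, mem_singleton_iff, mem_Ioc]
        constructor
        · rintro ⟨⟨h1, h2⟩, h3⟩; exact ⟨lt_of_le_of_ne h1 (Ne.symm h3), h2⟩
        · rintro ⟨h1, h2⟩; exact ⟨⟨h1.le, h2⟩, ne_of_gt h1⟩
      rw [hset] at h'
      refine ge_of_tendsto h' ?_
      filter_upwards [self_mem_nhdsWithin] with t ht
      have hφt : 0 ≤ φf t := by
        have := hpos_notF t (hIocIcc ht) (hIocnotF t ht) x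
        rw [hqeq t x hx] at this
        simpa [hφfdef] using this
      rw [slope_def_field]
      rw [hφtc]
      simp only [sub_zero]
      exact div_nonneg hφt (by linarith [ht.1])
    -- compute D and derive contradiction
    have hsymm_tc := hSsymm tc htcIcc
    have hvm : x ᵥ* S tc = S tc *ᵥ x := by
      conv_lhs => rw [← hsymm_tc.eq]
      exact Matrix.vecMul_transpose _ _
    have hD1 : L (S tc * A tc) = -c * (x ⬝ᵥ (A tc *ᵥ x)) := by
      rw [hL, ← Matrix.mulVec_mulVec, Matrix.dotProduct_mulVec, hvm, hSx]
      rw [smul_dotProduct, smul_eq_mul]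
    have hD2 : L ((A tc)ᵀ * S tc) = -c * (x ⬝ᵥ (A tc *ᵥ x)) := by
      rw [hL, ← Matrix.mulVec_mulVec]
      rw [hSx, Matrix.mulVec_smul, dotProduct_smul, smul_eq_mul]
      congr 1
      rw [Matrix.dotProduct_mulVec, Matrix.vecMul_transpose, dotProduct_comm]
    have hNx : 0 ≤ x ⬝ᵥ (N tc *ᵥ x) := by simpa using (hN tc htcIcc).dotProduct_mulVec_nonneg x
    have hAx : |x ⬝ᵥ (A tc *ᵥ x)| ≤ n * CA := by
      refine (quad_bound (A tc) hx).trans ?_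
      exact mul_le_mul_of_nonneg_left (hAb tc htcIcc) (Nat.cast_nonneg n)
    have hDval : D = 2 * c * (x ⬝ᵥ (A tc *ᵥ x)) - x ⬝ᵥ (N tc *ᵥ x) - c * K := by
      rw [hDdef]
      have : L (-(S tc * A tc + (A tc)ᵀ * S tc + N tc)) =
          -(L (S tc * A tc) + L ((A tc)ᵀ * S tc) + L (N tc)) := by
        rw [map_neg, map_add, map_add]
      rw [this, hD1, hD2, hL, hcdef]
      ring
    have hcontra : D < 0 := by
      rw [hDval, hKdef]
      have h1 : 2 * c * (x ⬝ᵥ (A tc *ᵥ x)) ≤ 2 * c * (n * CA) := by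
        have := (abs_le.mp hAx).2
        nlinarith
      nlinarith
    linarith
  -- conclude: S t is PSD
  intro t ht
  refine Matrix.PosSemidef.of_dotProduct_mulVec_nonneg ?_ ?_
  · rw [Matrix.IsHermitian, Matrix.conjTranspose_eq_transpose_of_trivial]
    exact (hSsymm t ht).eq
  · intro y
    simp only [star_trivial]
    rcases eq_or_ne y 0 with rfl | hy
    · simp
    obtain ⟨u, hu1, c, hc, hquad⟩ := unit_scale hy
    have key2 : 0 ≤ u ⬝ᵥ (S t *ᵥ u) := by
      by_contra hneg
      push_neg at hneg
      set a : ℝ := u ⬝ᵥ (S t *ᵥ u) with hadef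
      set e : ℝ := Real.exp ((2 * n * CA + 1) * (T - t)) with hedef
      have he : 0 < e := Real.exp_pos _
      have hε : 0 < (-a) / (2 * e) := by
        apply div_pos (by linarith) (by linarith)
      have := main ((-a) / (2 * e)) hε t ht u hu1
      have hq := this
      rw [show (S t + ((-a) / (2 * e) * Real.exp ((2 * ↑n * CA + 1) * (T - t))) •
        (1 : Matrix (Fin n) (Fin n) ℝ)) = (S t + ((-a) / (2 * e) * e) •
        (1 : Matrix (Fin n) (Fin n) ℝ)) from by rw [hedef]] at hq
      have heq : u ⬝ᵥ ((S t + ((-a) / (2 * e) * e) • (1 : Matrix (Fin n) (Fin n) ℝ)) *ᵥ u)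
          = a + (-a) / (2 * e) * e := by
        simp only [Matrix.add_mulVec, Matrix.smul_mulVec, Matrix.one_mulVec,
          dotProduct_add, dotProduct_smul, smul_eq_mul, hu1, mul_one, hadef]
      rw [heq] at hq
      have : (-a) / (2 * e) * e = -a / 2 := by field_simp
      rw [this] at hq
      linarith
    have heq2 := hquad (S t)
    by_contra hneg2
    push_neg at hneg2
    have h2 : c * (y ⬝ᵥ (S t *ᵥ y)) < 0 := mul_neg_of_pos_of_neg hc hneg2
    rw [← heq2] at h2
    linarith

private lemma contOn_mmul {X : Type*} [TopologicalSpace X] {l m k : ℕ}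
    {f : X → Matrix (Fin l) (Fin m) ℝ} {g : X → Matrix (Fin m) (Fin k) ℝ} {s : Set X}
    (hf : ContinuousOn f s) (hg : ContinuousOn g s) :
    ContinuousOn (fun x => f x * g x) s :=
  (continuous_fst.matrix_mul continuous_snd).comp_continuousOn (hf.prodMk hg)

section main
variable {n m : ℕ} {T δ : ℝ}

private lemma rpd (hδ : 0 < δ) {R : Matrix (Fin m) (Fin m) ℝ}
    (hR : (R - δ • (1 : Matrix (Fin m) (Fin m) ℝ)).PosSemidef) : R.PosDef := by
  refine Matrix.PosDef.of_dotProduct_mulVec_pos ?_ ?_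
  · have h1 := hR.1
    have : R = (R - δ • 1) + δ • 1 := (sub_add_cancel R (δ • 1)).symm
    rw [this]
    refine h1.add ?_
    rw [Matrix.IsHermitian, Matrix.conjTranspose_smul, Matrix.conjTranspose_one]
    norm_num
  · intro x hx
    have h1 : 0 ≤ star x ⬝ᵥ ((R - δ • 1) *ᵥ x) := hR.dotProduct_mulVec_nonneg x
    have hxx : 0 < x ⬝ᵥ x := by
      have h0 : 0 ≤ x ⬝ᵥ x := by
        rw [dotProduct]; exact Finset.sum_nonneg fun i _ => mul_self_nonneg _
      exact lt_of_le_of_ne h0 (fun h => hx (dotProduct_self_eq_zero.mp h.symm))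
    have hexp : star x ⬝ᵥ ((R - δ • 1) *ᵥ x) = star x ⬝ᵥ (R *ᵥ x) - δ * (x ⬝ᵥ x) := by
      simp only [Matrix.sub_mulVec, dotProduct_sub, Matrix.smul_mulVec,
        Matrix.one_mulVec, dotProduct_smul, smul_eq_mul, star_trivial]
    rw [hexp] at h1
    have : 0 < δ * (x ⬝ᵥ x) := mul_pos hδ hxx
    linarith
end main


/-- if `P` solves the Riccati equation
`Ṗ + PA + AᵀP + Q − PBR⁻¹BᵀP = 0`, `P(T) = G`, and `P₀` solves the Lyapunov equation
`Ṗ₀ + P₀A + AᵀP₀ + Q = 0`, `P₀(T) = G`, then `0 ≤ P(t) ≤ P₀(t)` on `[0,T]`. -/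
theorem stmt_9 (n m : ℕ) (T δ : ℝ) (hT : 0 < T) (hδ : 0 < δ)
    (A : ℝ → Matrix (Fin n) (Fin n) ℝ) (B : ℝ → Matrix (Fin n) (Fin m) ℝ)
    (Q : ℝ → Matrix (Fin n) (Fin n) ℝ) (R : ℝ → Matrix (Fin m) (Fin m) ℝ)
    (G : Matrix (Fin n) (Fin n) ℝ)
    (hA : ContinuousOn A (Icc 0 T)) (hB : ContinuousOn B (Icc 0 T))
    (hQc : ContinuousOn Q (Icc 0 T)) (hRc : ContinuousOn R (Icc 0 T))
    (hQ : ∀ s ∈ Icc (0:ℝ) T, (Q s).PosSemidef)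
    (hR : ∀ s ∈ Icc (0:ℝ) T, (R s - δ • (1 : Matrix (Fin m) (Fin m) ℝ)).PosSemidef)
    (hG : G.PosSemidef)
    (P P0 : ℝ → Matrix (Fin n) (Fin n) ℝ)
    (hP : ∀ s ∈ Icc (0:ℝ) T,
      HasDerivWithinAt P
        (-(P s * A s + (A s)ᵀ * P s + Q s - P s * B s * (R s)⁻¹ * (B s)ᵀ * P s))
        (Icc 0 T) s)
    (hPT : P T = G)
    (hPs : ∀ s ∈ Icc (0:ℝ) T, (P s).IsSymm)
    (hP0 : ∀ s ∈ Icc (0:ℝ) T,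
      HasDerivWithinAt P0 (-(P0 s * A s + (A s)ᵀ * P0 s + Q s)) (Icc 0 T) s)
    (hP0T : P0 T = G)
    (hP0s : ∀ s ∈ Icc (0:ℝ) T, (P0 s).IsSymm) :
    ∀ t ∈ Icc (0:ℝ) T, (P t).PosSemidef ∧ (P0 t - P t).PosSemidef := by
  have hRpdf : ∀ s ∈ Icc (0:ℝ) T, (R s).PosDef := fun s hs => rpd hδ (hR s hs)
  have hPc : ContinuousOn P (Icc 0 T) := fun s hs => (hP s hs).continuousWithinAt
  have hRinvc : ContinuousOn (fun s => (R s)⁻¹) (Icc 0 T) := by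
    intro s hs
    have hdet : ((R s).det) ≠ 0 := (hRpdf s hs).det_pos.ne'
    have h1 : ContinuousAt Ring.inverse ((R s).det) := by
      rw [Ring.inverse_eq_inv']
      exact continuousAt_inv₀ hdet
    exact (continuousAt_matrix_inv _ h1).comp_continuousWithinAt (hRc s hs)
  have hBt : ContinuousOn (fun s => (B s)ᵀ) (Icc 0 T) :=
    (continuous_id.matrix_transpose).comp_continuousOn hB
  have hRinvT : ∀ s ∈ Icc (0:ℝ) T, ((R s)⁻¹)ᵀ = (R s)⁻¹ := by
    intro s hs
    rw [Matrix.transpose_nonsing_inv]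
    congr 1
    have h := (hRpdf s hs).1
    rw [Matrix.IsHermitian, Matrix.conjTranspose_eq_transpose_of_trivial] at h
    exact h
  have hPos : ∀ s ∈ Icc (0:ℝ) T, (P s * B s * (R s)⁻¹ * (B s)ᵀ * P s).PosSemidef := by
    intro s hs
    have h1 : ((R s)⁻¹).PosDef := (hRpdf s hs).inv
    have h2 := h1.posSemidef.conjTranspose_mul_mul_same ((B s)ᵀ * P s)
    have he : ((B s)ᵀ * P s)ᴴ * (R s)⁻¹ * ((B s)ᵀ * P s)
        = P s * B s * (R s)⁻¹ * (B s)ᵀ * P s := by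
      rw [Matrix.conjTranspose_eq_transpose_of_trivial, Matrix.transpose_mul,
        Matrix.transpose_transpose, (hPs s hs).eq, ← Matrix.mul_assoc]
    rwa [he] at h2
  have happ1 : ∀ t ∈ Icc (0:ℝ) T, (P t).PosSemidef := by
    refine riccati_mono hT (fun s => A s - B s * (R s)⁻¹ * (B s)ᵀ * P s)
      (fun s => Q s + P s * B s * (R s)⁻¹ * (B s)ᵀ * P s) P ?_ ?_ ?_ hPs
      (by rw [hPT]; exact hG)
    · exact hA.sub (contOn_mmul (contOn_mmul (contOn_mmul hB hRinvc) hBt) hPc)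
    · exact fun s hs => (hQ s hs).add (hPos s hs)
    · intro s hs
      have h := hP s hs
      have heq : -(P s * A s + (A s)ᵀ * P s + Q s - P s * B s * (R s)⁻¹ * (B s)ᵀ * P s)
          = -(P s * (A s - B s * (R s)⁻¹ * (B s)ᵀ * P s)
            + (A s - B s * (R s)⁻¹ * (B s)ᵀ * P s)ᵀ * P s
            + (Q s + P s * B s * (R s)⁻¹ * (B s)ᵀ * P s)) := by
        simp only [Matrix.transpose_sub, Matrix.transpose_mul, Matrix.transpose_transpose,
          (hPs s hs).eq, hRinvT s hs, Matrix.mul_sub, Matrix.sub_mul, Matrix.mul_assoc]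
        abel
      rw [heq] at h
      exact h
  have happ2 : ∀ t ∈ Icc (0:ℝ) T, (P0 t - P t).PosSemidef := by
    refine riccati_mono hT A (fun s => P s * B s * (R s)⁻¹ * (B s)ᵀ * P s)
      (fun t => P0 t - P t) hA hPos ?_ ?_ ?_
    · intro s hs
      have h := (hP0 s hs).sub (hP s hs)
      have heq : (-(P0 s * A s + (A s)ᵀ * P0 s + Q s))
          - (-(P s * A s + (A s)ᵀ * P s + Q s - P s * B s * (R s)⁻¹ * (B s)ᵀ * P s))
          = -((P0 s - P s) * A s + (A s)ᵀ * (P0 s - P s)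
            + P s * B s * (R s)⁻¹ * (B s)ᵀ * P s) := by
        simp only [Matrix.sub_mul, Matrix.mul_sub, Matrix.mul_assoc]
        abel
      rw [heq] at h
      exact h
    · exact fun s hs => (hP0s s hs).sub (hPs s hs)
    · show (P0 T - P T).PosSemidef
      rw [hP0T, hPT, sub_self]
      exact Matrix.PosSemidef.zero
  exact fun t ht => ⟨happ1 t ht, happ2 t ht⟩
end

section
/- Let h:[0,T]→[δ,∞) with δ>0, fix 0 ≤ t < τ < T and x ∈ ℝ, let ū(s) ≡ −xh(t)/(1+h(t)(T−t)) and y = x(1+h(t)(T−τ))/(1+h(t)(T−t)). Write J(τ,y;u) = ∫_τ^T u(s)²ds + h(τ)(y+∫_τ^T u(s)ds)² for u ∈ L²(τ,T;ℝ). Then J(τ,y;ū|_{[τ,T]}) − inf_{u∈L²(τ,T;ℝ)} J(τ,y;u) = x²(h(τ)−h(t))²(T−τ) / ( [1+h(τ)(T−τ)]·[1+h(t)(T−t)]² ), which is strictly positive whenever x ≠ 0 and h(τ) ≠ h(t). In particular, the restriction to [τ,T] of the optimal control for (t,x) is not optimal for the initial pair (τ,y) unless x=0 or h(τ)=h(t):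 Problem (C) is time-inconsistent. -/
open Set MeasureTheory

/-- Cauchy–Schwarz for an `L²` function on `Ioc τ T`. -/
lemma cs_aux (τ T : ℝ) (hτT : τ < T) (u : ℝ → ℝ)
    (hu : MemLp u 2 (volume.restrict (Ioc τ T))) :
    (∫ s in Ioc τ T, u s) ^ 2 ≤ (T - τ) * ∫ s in Ioc τ T, (u s) ^ 2 := by
  haveI : Fact (volume (Ioc τ T) < ⊤) := ⟨by simp [Real.volume_Ioc]⟩
  have hint : Integrable u (volume.restrict (Ioc τ T)) := hu.integrable one_le_two
  have hsq : Integrable (fun s => u s ^ 2) (volume.restrict (Ioc τ T)) := hu.integrable_sq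
  set A := ∫ s in Ioc τ T, u s with hA
  set I := ∫ s in Ioc τ T, (u s) ^ 2 with hI
  set L := T - τ with hL
  have hL0 : 0 < L := by linarith
  set c := A / L with hc
  have hexp : ∫ s in Ioc τ T, (u s - c) ^ 2 = I - 2 * c * A + c ^ 2 * L := by
    have : ∀ s, (u s - c) ^ 2 = u s ^ 2 - (2 * c) * u s + c ^ 2 := by intro s; ring
    simp_rw [this]
    have g1 : Integrable (fun s => u s ^ 2 - 2 * c * u s) (volume.restrict (Ioc τ T)) :=
      hsq.sub (hint.const_mul _)
    rw [integral_add g1 (integrable_const _),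
      integral_sub hsq (hint.const_mul _), integral_const, MeasureTheory.integral_const_mul]
    simp [Real.volume_Ioc, ENNReal.toReal_ofReal hL0.le, hL, mul_comm, max_eq_left (sub_nonneg.mpr hτT.le)]
    rfl
  have hpos : 0 ≤ ∫ s in Ioc τ T, (u s - c) ^ 2 :=
    integral_nonneg fun s => sq_nonneg _
  rw [hexp, hc] at hpos
  have h2 : A ^ 2 / L ≤ I := by
    have e : I - 2 * (A / L) * A + (A / L) ^ 2 * L = I - A ^ 2 / L := by
      field_simp; ring
    rw [e] at hpos; linarith
  calc A ^ 2 = A ^ 2 / L * L := by field_simp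
  _ ≤ I * L := mul_le_mul_of_nonneg_right h2 hL0.le
  _ = L * I := mul_comm _ _

/-- time-inconsistency of Problem (C).  With
`ū ≡ −xh(t)/(1+h(t)(T−t))` and `y = x(1+h(t)(T−τ))/(1+h(t)(T−t))`, the excess of the
cost `J(τ,y;ū|_{[τ,T]})` over `inf_u J(τ,y;u)` equals
`x²(h(τ)−h(t))²(T−τ)/([1+h(τ)(T−τ)][1+h(t)(T−t)]²)`, which is strictly positive
whenever `x ≠ 0` and `h(τ) ≠ h(t)`. -/
theorem stmt_17 (T δ : ℝ) (hT : 0 < T) (hδ : 0 < δ)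
    (h : ℝ → ℝ) (hh : ∀ s ∈ Icc (0:ℝ) T, δ ≤ h s)
    (t τ x : ℝ) (ht : 0 ≤ t) (htτ : t < τ) (hτT : τ < T) :
    ((∫ _s in τ..T, (-(x * h t) / (1 + h t * (T - t))) ^ 2)
        + h τ * ((x * (1 + h t * (T - τ)) / (1 + h t * (T - t)))
            + ∫ _s in τ..T, -(x * h t) / (1 + h t * (T - t))) ^ 2)
      - sInf {J : ℝ | ∃ u : ℝ → ℝ, MemLp u 2 (volume.restrict (Ioc τ T)) ∧
          J = (∫ s in τ..T, (u s) ^ 2)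
            + h τ * ((x * (1 + h t * (T - τ)) / (1 + h t * (T - t)))
                + ∫ s in τ..T, u s) ^ 2}
      = x ^ 2 * (h τ - h t) ^ 2 * (T - τ)
          / ((1 + h τ * (T - τ)) * (1 + h t * (T - t)) ^ 2) ∧
    (x ≠ 0 → h τ ≠ h t →
      0 < x ^ 2 * (h τ - h t) ^ 2 * (T - τ)
          / ((1 + h τ * (T - τ)) * (1 + h t * (T - t)) ^ 2)) := by
  have ha : 0 < h t := lt_of_lt_of_le hδ (hh t ⟨ht, by linarith⟩)
  have hk : 0 < h τ := lt_of_lt_of_le hδ (hh τ ⟨by linarith, hτT.le⟩)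
  set a := h t
  set k := h τ
  set L := T - τ with hLdef
  have hL0 : 0 < L := by simp [hLdef]; linarith
  have hD1 : 0 < 1 + a * (T - t) := by nlinarith
  have hD2 : 0 < 1 + k * L := by nlinarith
  set y := x * (1 + a * (T - τ)) / (1 + a * (T - t)) with hy
  set m := k * y ^ 2 / (1 + k * L) with hm
  -- the set of achievable costs
  set S := {J : ℝ | ∃ u : ℝ → ℝ, MemLp u 2 (volume.restrict (Ioc τ T)) ∧
      J = (∫ s in τ..T, (u s) ^ 2) + k * (y + ∫ s in τ..T, u s) ^ 2} with hS
  -- lower bound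
  have hlb : ∀ J ∈ S, m ≤ J := by
    rintro J ⟨u, hu, rfl⟩
    rw [intervalIntegral.integral_of_le hτT.le, intervalIntegral.integral_of_le hτT.le]
    set A := ∫ s in Ioc τ T, u s with hA
    set I := ∫ s in Ioc τ T, (u s) ^ 2 with hI
    have hcs : A ^ 2 ≤ L * I := cs_aux τ T hτT u hu
    rw [hm, div_le_iff₀ hD2]
    nlinarith [sq_nonneg ((1 + k * L) * A + k * L * y), mul_nonneg hD2.le (sub_nonneg.mpr hcs),
      mul_pos hk hL0, sq_nonneg (y + A), sq_nonneg A]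
  -- the infimum is attained by the constant control
  have hmem : m ∈ S := by
    refine ⟨fun _ => -(y * k) / (1 + k * L), memLp_const _, ?_⟩
    rw [intervalIntegral.integral_const, intervalIntegral.integral_const]
    rw [hm, smul_eq_mul, smul_eq_mul, hLdef]
    have hD2' : 1 + k * (T - τ) ≠ 0 := hD2.ne'
    field_simp
    ring
  have hinf : sInf S = m :=
    le_antisymm (csInf_le ⟨m, hlb⟩ hmem) (le_csInf ⟨m, hmem⟩ hlb)
  constructor
  · rw [hinf]
    rw [intervalIntegral.integral_const, intervalIntegral.integral_const]
    rw [hm, smul_eq_mul, smul_eq_mul, hy, hLdef]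
    have hD2' : 1 + k * (T - τ) ≠ 0 := hD2.ne'
    have hD1' : 1 + a * (T - t) ≠ 0 := hD1.ne'
    have hD2'' : 1 + (T - τ) * k ≠ 0 := by rw [mul_comm]; exact hD2'
    field_simp
    field_simp
    ring
  · intro hx hne
    apply div_pos
    · have h1 : 0 < x ^ 2 := by positivity
      have h2 : 0 < (k - a) ^ 2 := by
        have : k - a ≠ 0 := sub_ne_zero.mpr hne
        positivity
      have h3 : 0 < T - τ := by linarith
      positivity
    · have : 0 < (1 + a * (T - t)) ^ 2 := by positivity
      have h2 : 0 < 1 + k * (T - τ) := hD2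
      positivity
end
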